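/- arXiv:2507.05131 — 3 statements merged into one kernel-verified Lean document; each statement's English description precedes it below -/
import Mathlib

section
/- Isserlis' theorem: for a centered jointly Gaussian vector (X_1, ..., X_{2r}), the expectation E[X_1 · X_2 · ... · X_{2r}] equals the sum over all perfect matchings (pairings) P of {1,...,2r} of the product over pairs {i,j} in P of E[X_i X_j]. In particular, the expectation of a product of an odd number of centered jointly Gaussian variables is zero. -/
open MeasureTheory ProbabilityTheory
open scoped BigOperators Classical

open Real Filter Finset
open scoped NNReal ENNReal

lemma integrable_pow_mul_exp_neg_mul_sq {b : ℝ} (hb : 0 < b) (k : ℕ) :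
    Integrable (fun x : ℝ => x ^ k * Real.exp (-b * x ^ 2)) := by
  have := integrable_rpow_mul_exp_neg_mul_sq hb (s := (k : ℝ))
    (lt_of_lt_of_le neg_one_lt_zero (Nat.cast_nonneg k))
  simpa [Real.rpow_natCast] using this

lemma tendsto_pow_mul_exp_neg_mul_sq_atTop {b : ℝ} (hb : 0 < b) (k : ℕ) :
    Tendsto (fun x : ℝ => x ^ k * Real.exp (-b * x ^ 2)) atTop (nhds 0) := by
  have h := (rpow_mul_exp_neg_mul_sq_isLittleO_exp_neg hb (k : ℝ)).isBigO.trans_tendsto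
    (by
      have hlin : Tendsto (fun x : ℝ => -(1/2) * x) atTop atBot := by
        have h0 : Tendsto (fun x : ℝ => (1/2) * x) atTop atTop :=
          (tendsto_const_mul_atTop_of_pos (by norm_num : (0:ℝ) < 1/2)).mpr tendsto_id
        have := tendsto_neg_atTop_atBot.comp h0
        exact this.congr (fun x => by simp [Function.comp])
      exact (tendsto_exp_atBot.comp hlin).congr (fun x => rfl))
  simpa [Real.rpow_natCast] using h

lemma tendsto_pow_mul_exp_neg_mul_sq_atBot {b : ℝ} (hb : 0 < b) (k : ℕ) :
    Tendsto (fun x : ℝ => x ^ k * Real.exp (-b * x ^ 2)) atBot (nhds 0) := by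
  have h : Tendsto (fun x : ℝ => ((-x) ^ k * Real.exp (-b * (-x) ^ 2))) atTop (nhds 0) := by
    have := (tendsto_pow_mul_exp_neg_mul_sq_atTop hb k).const_mul ((-1:ℝ)^k)
    simp only [mul_zero] at this
    refine this.congr (fun x => by ring_nf)
  have h2 := h.comp tendsto_neg_atBot_atTop
  refine h2.congr (fun x => ?_)
  simp only [Function.comp]
  ring_nf

/-- integral of derivative of a pow-times-gaussian over ℝ is zero -/
lemma integral_deriv_pow_gauss {b : ℝ} (hb : 0 < b) (k : ℕ) :
    ∫ x : ℝ, ((k+1 : ℝ) * x ^ k * Real.exp (-b * x^2) - 2 * b * x ^ (k+2) * Real.exp (-b * x^2)) = 0 := by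
  set g : ℝ → ℝ := fun x => x ^ (k+1) * Real.exp (-b * x ^ 2) with hg
  set g' : ℝ → ℝ := fun x => (k+1 : ℝ) * x ^ k * Real.exp (-b * x^2) - 2 * b * x ^ (k+2) * Real.exp (-b * x^2) with hg'
  have hderiv : ∀ x : ℝ, HasDerivAt g (g' x) x := by
    intro x
    have h1 : HasDerivAt (fun x : ℝ => x ^ (k+1)) ((k+1 : ℝ) * x ^ k) x := by
      simpa using hasDerivAt_pow (k+1) x
    have h2 : HasDerivAt (fun x : ℝ => Real.exp (-b * x ^ 2)) (Real.exp (-b * x ^ 2) * (-b * (2 * x))) x := by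
      have : HasDerivAt (fun x : ℝ => -b * x ^ 2) (-b * (2 * x)) x := by
        simpa using ((hasDerivAt_pow 2 x).const_mul (-b))
      exact this.exp
    have := h1.mul h2
    refine HasDerivAt.congr_deriv (f := g) this ?_
    simp only [hg']
    ring
  have hint : Integrable g' := by
    refine (((integrable_pow_mul_exp_neg_mul_sq hb k).const_mul ((k:ℝ)+1)).sub
      (((integrable_pow_mul_exp_neg_mul_sq hb (k+2)).const_mul (2*b)))).congr ?_
    filter_upwards with x; simp only [Pi.sub_apply, hg']; ring
  have htop : Tendsto g atTop (nhds 0) := tendsto_pow_mul_exp_neg_mul_sq_atTop hb (k+1)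
  have hbot : Tendsto g atBot (nhds 0) := tendsto_pow_mul_exp_neg_mul_sq_atBot hb (k+1)
  have hIoi : ∫ x in Set.Ioi (0:ℝ), g' x = 0 - g 0 := by
    refine MeasureTheory.integral_Ioi_of_hasDerivAt_of_tendsto
      (hderiv 0).continuousAt.continuousWithinAt (fun x _ => hderiv x) hint.integrableOn htop
  have hIic : ∫ x in Set.Iic (0:ℝ), g' x = g 0 - 0 := by
    refine MeasureTheory.integral_Iic_of_hasDerivAt_of_tendsto
      (hderiv 0).continuousAt.continuousWithinAt (fun x _ => hderiv x) hint.integrableOn hbot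
  have := intervalIntegral.integral_Iic_add_Ioi (b := (0:ℝ)) (f := g') (μ := volume)
    hint.integrableOn hint.integrableOn
  rw [← this, hIoi, hIic]; ring

noncomputable def Gm (k : ℕ) : ℝ := ∫ x, x ^ k ∂(gaussianReal 0 1)

lemma integrable_pow_gaussianReal (v : NNReal) (k : ℕ) :
    Integrable (fun x : ℝ => x ^ k) (gaussianReal 0 v) := by
  by_cases hv : v = 0
  · rw [hv, gaussianReal_zero_var]
    exact (integrable_const ((0:ℝ) ^ k)).congr
      (MeasureTheory.ae_eq_dirac' (f := fun x : ℝ => x ^ k) (by fun_prop)).symm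
  · rw [gaussianReal_of_var_ne_zero _ hv]
    rw [integrable_withDensity_iff (measurable_gaussianPDF 0 v)
      (Filter.Eventually.of_forall (fun x => ENNReal.ofReal_lt_top))]
    have hb : (0:ℝ) < 1 / (2 * v) := by
      have : (0:ℝ) < (v:ℝ) := lt_of_le_of_ne v.coe_nonneg (by exact_mod_cast (Ne.symm hv))
      positivity
    refine ((integrable_pow_mul_exp_neg_mul_sq hb k).const_mul ((√(2 * π * v))⁻¹)).congr ?_
    filter_upwards with x
    rw [gaussianPDF_def, ENNReal.toReal_ofReal (gaussianPDFReal_nonneg 0 v x),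
      gaussianPDFReal_def]
    have hv' : (v:ℝ) ≠ 0 := by exact_mod_cast hv
    have h5 : -(x - 0) ^ 2 / (2 * (v:ℝ)) = -(1 / (2 * v)) * x ^ 2 := by field_simp; ring
    show (√(2 * π * ↑v))⁻¹ * (x ^ k * rexp (-(1 / (2 * ↑v)) * x ^ 2))
      = x ^ k * ((√(2 * π * ↑v))⁻¹ * rexp (-(x - 0) ^ 2 / (2 * ↑v)))
    rw [h5]; ring

lemma integral_pow_gaussianReal (v : NNReal) (k : ℕ) :
    ∫ x, x ^ k ∂(gaussianReal 0 v) = (Real.sqrt v) ^ k * Gm k := by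
  have hmap : Measure.map (fun x => (Real.sqrt v) * x) (gaussianReal 0 1) = gaussianReal 0 v := by
    rw [gaussianReal_map_const_mul]
    congr 1
    · ring
    · ext
      simp [Real.sq_sqrt (v.coe_nonneg)]
  rw [← hmap, integral_map (by fun_prop) (by fun_prop)]
  simp_rw [mul_pow]
  rw [integral_const_mul]
  rfl

lemma Gm_odd {k : ℕ} (hk : Odd k) : Gm k = 0 := by
  have hmap : Measure.map (fun x => (-1 : ℝ) * x) (gaussianReal 0 1) = gaussianReal 0 1 := by
    rw [gaussianReal_map_const_mul]
    congr 1
    · ring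
    · ext; norm_num
  have h : Gm k = -Gm k := by
    conv_lhs => rw [Gm, ← hmap, integral_map (by fun_prop) (by fun_prop)]
    simp_rw [mul_pow, hk.neg_one_pow]
    rw [integral_const_mul]
    simp [Gm]
  linarith

lemma Gm_zero : Gm 0 = 1 := by simp [Gm]

lemma Gm_pdf (k : ℕ) : Gm k = ∫ x : ℝ, (√(2 * π))⁻¹ * (x ^ k * Real.exp (-(1/2 : ℝ) * x ^ 2)) := by
  rw [Gm, gaussianReal_of_var_ne_zero _ one_ne_zero]
  have : gaussianPDF 0 1 = fun x => (((gaussianPDFReal 0 1 x).toNNReal : ℝ≥0) : ℝ≥0∞) := by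
    rw [gaussianPDF_def]; rfl
  rw [this, integral_withDensity_eq_integral_smul ((measurable_gaussianPDFReal 0 1).real_toNNReal)]
  congr 1; ext x
  rw [NNReal.smul_def, smul_eq_mul, Real.coe_toNNReal _ (gaussianPDFReal_nonneg 0 1 x),
    gaussianPDFReal_def]
  push_cast
  rw [mul_one]
  have : -(x - 0) ^ 2 / (2 * (1:ℝ)) = -(1/2 : ℝ) * x ^ 2 := by ring
  rw [this]; ring

lemma Gm_rec (k : ℕ) : Gm (k + 2) = (k + 1 : ℝ) * Gm k := by
  have h0 := integral_deriv_pow_gauss (b := (1/2 : ℝ)) (by norm_num) k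
  have h1 : Integrable (fun x : ℝ => x ^ k * Real.exp (-(1/2:ℝ) * x ^ 2)) :=
    integrable_pow_mul_exp_neg_mul_sq (by norm_num) k
  have h2 : Integrable (fun x : ℝ => x ^ (k+2) * Real.exp (-(1/2:ℝ) * x ^ 2)) :=
    integrable_pow_mul_exp_neg_mul_sq (by norm_num) (k+2)
  have h0' : ∫ x : ℝ, ((k+1:ℝ) * (x ^ k * Real.exp (-(1/2:ℝ) * x ^ 2))
      - x ^ (k+2) * Real.exp (-(1/2:ℝ) * x ^ 2)) = 0 := by
    rw [← h0]; congr 1; ext x; ring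
  rw [integral_sub (h1.const_mul ((k:ℝ)+1)) h2, integral_const_mul] at h0'
  rw [Gm_pdf, Gm_pdf, integral_const_mul, integral_const_mul]
  have h6 : ∫ x : ℝ, x ^ (k+2) * Real.exp (-(1/2:ℝ) * x ^ 2)
      = ((k:ℝ)+1) * ∫ x : ℝ, x ^ k * Real.exp (-(1/2:ℝ) * x ^ 2) := by linarith
  rw [h6]; ring


lemma neg_one_pow_sub (n c : ℕ) (h : c ≤ n) : (-1:ℝ)^(n-c) = (-1)^n * (-1)^c := by
  have h1 : (-1:ℝ)^(n-c) * (-1)^c = (-1)^n := by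
    rw [← pow_add, Nat.sub_add_cancel h]
  have h2 : ((-1:ℝ)^c) * ((-1)^c) = 1 := by
    rw [← pow_add]
    exact Even.neg_one_pow ⟨c, rfl⟩
  linear_combination ((-1:ℝ)^c) * h1 - ((-1:ℝ)^(n-c)) * h2

lemma alt_filter {n : ℕ} (S : Finset (Fin n)) :
    ∑ T : Finset (Fin n), (if S ⊆ T then (-1:ℝ)^(n - T.card) else 0)
      = if S = Finset.univ then 1 else 0 := by
  have key : ∀ T : Finset (Fin n), (-1:ℝ)^(n - T.card) = (-1)^n * (-1)^T.card := by
    intro T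
    exact neg_one_pow_sub n T.card (by simpa using T.card_le_univ)
  calc ∑ T : Finset (Fin n), (if S ⊆ T then (-1:ℝ)^(n - T.card) else 0)
      = ∑ T ∈ Finset.univ.filter (fun T => S ⊆ T), (-1:ℝ)^n * (-1)^T.card := by
        rw [Finset.sum_filter]
        exact Finset.sum_congr rfl (fun T _ => by rw [key])
    _ = ∑ t ∈ (Finset.univ \ S).powerset, (-1:ℝ)^n * (-1)^(S.card + t.card) := by
        refine Finset.sum_nbij' (fun T => T \ S) (fun t => S ∪ t) ?_ ?_ ?_ ?_ ?_
        · intro T hT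
          simp only [Finset.mem_filter] at hT
          exact Finset.mem_powerset.mpr (Finset.sdiff_subset_sdiff (Finset.subset_univ T) le_rfl)
        · intro t ht
          simp only [Finset.mem_filter, Finset.mem_univ, true_and]
          exact Finset.subset_union_left
        · intro T hT
          simp only [Finset.mem_filter] at hT
          exact Finset.union_sdiff_of_subset hT.2
        · intro t ht
          simp only [Finset.mem_powerset] at ht
          exact Finset.union_sdiff_cancel_left (Finset.disjoint_left.mpr
            (fun a haS hat => (Finset.mem_sdiff.mp (ht hat)).2 haS))
        · intro T hT
          simp only [Finset.mem_filter] at hT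
          congr 2
          rw [Finset.card_sdiff_of_subset hT.2, Nat.add_sub_cancel' (Finset.card_le_card hT.2)]
    _ = (-1:ℝ)^n * (-1)^S.card * ∑ t ∈ (Finset.univ \ S).powerset, (-1:ℝ)^t.card := by
        rw [Finset.mul_sum]
        exact Finset.sum_congr rfl (fun t _ => by rw [pow_add]; ring)
    _ = if S = Finset.univ then 1 else 0 := by
        have hz := congrArg (Int.cast : ℤ → ℝ)
          (Finset.sum_powerset_neg_one_pow_card (x := Finset.univ \ S))
        push_cast at hz
        rw [hz]
        by_cases h : S = Finset.univ
        · rw [if_pos h, if_pos (by rw [h]; exact Finset.sdiff_self _), h, mul_one, Finset.card_univ, Fintype.card_fin, ← pow_add]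
          exact Even.neg_one_pow ⟨n, rfl⟩
        · have h2 : ¬ (Finset.univ \ S = ∅) := by
            rw [Finset.sdiff_eq_empty_iff_subset]
            intro hc
            exact h (le_antisymm (Finset.subset_univ S) hc)
          simp [h, h2]

lemma polarization (n : ℕ) (x : Fin n → ℝ) :
    ∑ T : Finset (Fin n), (-1:ℝ)^(n - T.card) * (∑ i ∈ T, x i)^n
      = (n.factorial : ℝ) * ∏ i, x i := by
  have hexp : ∀ T : Finset (Fin n), (∑ i ∈ T, x i)^n
      = ∑ p ∈ Fintype.piFinset (fun _ : Fin n => T), ∏ k, x (p k) := by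
    intro T
    rw [← Finset.prod_univ_sum]
    rw [Finset.prod_const, Finset.card_univ, Fintype.card_fin]
  simp_rw [hexp]
  have hswap : ∀ T : Finset (Fin n),
      (-1:ℝ)^(n - T.card) * ∑ p ∈ Fintype.piFinset (fun _ : Fin n => T), ∏ k, x (p k)
      = ∑ p : Fin n → Fin n,
          (if Finset.image p Finset.univ ⊆ T then (-1:ℝ)^(n - T.card) * ∏ k, x (p k) else 0) := by
    intro T
    rw [← Finset.sum_filter, Finset.mul_sum]
    refine (Finset.sum_congr ?_ (fun p _ => rfl))
    ext p
    simp [Fintype.mem_piFinset, Finset.image_subset_iff]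
  simp_rw [hswap]
  rw [Finset.sum_comm]
  have hinner : ∀ p : Fin n → Fin n,
      ∑ T : Finset (Fin n), (if Finset.image p Finset.univ ⊆ T then (-1:ℝ)^(n - T.card) * ∏ k, x (p k) else 0)
      = (if Finset.image p Finset.univ = Finset.univ then 1 else 0) * ∏ k, x (p k) := by
    intro p
    rw [← alt_filter (Finset.image p Finset.univ), Finset.sum_mul]
    exact Finset.sum_congr rfl (fun T _ => by rw [ite_mul, zero_mul])
  simp_rw [hinner, ite_mul, zero_mul, one_mul]
  rw [← Finset.sum_filter]
  have hbij : ∑ p ∈ Finset.univ.filter (fun p : Fin n → Fin n => Finset.image p Finset.univ = Finset.univ),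
      ∏ k, x (p k) = ∑ σ : Equiv.Perm (Fin n), ∏ i, x i := by
    refine Finset.sum_bij (fun p hp => Equiv.ofBijective p ?_) ?_ ?_ ?_ ?_
    · simp only [Finset.mem_filter] at hp
      refine Finite.surjective_iff_bijective.mp (fun i => ?_)
      have := hp.2 ▸ Finset.mem_univ i
      rcases Finset.mem_image.mp (hp.2.symm ▸ Finset.mem_univ i) with ⟨k, _, hk⟩
      exact ⟨k, hk⟩
    · intro p hp; exact Finset.mem_univ _
    · intro p1 h1 p2 h2 heq
      have : ∀ k, p1 k = p2 k := fun k => congrArg (fun e => e k) heq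
      funext k; exact this k
    · intro σ _
      refine ⟨⇑σ, ?_, ?_⟩
      · simp only [Finset.mem_filter, Finset.mem_univ, true_and]
        ext i
        simp only [Finset.mem_image, Finset.mem_univ, true_and, iff_true]
        exact ⟨σ.symm i, σ.apply_symm_apply i⟩
      · ext k; rfl
    · intro p hp
      have hb : Function.Bijective p := by
        simp only [Finset.mem_filter] at hp
        refine Finite.surjective_iff_bijective.mp (fun i => ?_)
        rcases Finset.mem_image.mp (hp.2.symm ▸ Finset.mem_univ i) with ⟨k, _, hk⟩
        exact ⟨k, hk⟩
      exact (Equiv.prod_comp (Equiv.ofBijective p hb) x)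
  rw [hbij, Finset.sum_const, Finset.card_univ, Fintype.card_perm, Fintype.card_fin,
    nsmul_eq_mul]


section Involutions
variable {n r : ℕ}

lemma invol_apply {σ : Equiv.Perm (Fin n)} (hσ2 : σ * σ = 1) : ∀ i, σ (σ i) = i := by
  intro i
  have := congrArg (fun τ : Equiv.Perm (Fin n) => τ i) hσ2
  simpa [Equiv.Perm.mul_apply] using this

lemma two_mul_card_filter_lt (σ : Equiv.Perm (Fin n)) (hσσ : ∀ i, σ (σ i) = i)
    (hfpf : ∀ i, σ i ≠ i) :
    2 * (Finset.univ.filter (fun i => i < σ i)).card = n := by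
  have h1 : (Finset.univ.filter (fun i => i < σ i)).card
      = (Finset.univ.filter (fun i => σ i < i)).card := by
    refine Finset.card_bij (fun i _ => σ i) ?_ ?_ ?_
    · intro i hi
      simp only [Finset.mem_filter, Finset.mem_univ, true_and] at hi ⊢
      rw [hσσ]; exact hi
    · intro a ha b hb h
      have := congrArg σ h
      rwa [hσσ, hσσ] at this
    · intro j hj
      simp only [Finset.mem_filter, Finset.mem_univ, true_and] at hj
      refine ⟨σ j, ?_, hσσ j⟩
      simp only [Finset.mem_filter, Finset.mem_univ, true_and, hσσ]
      exact hj
  have h3 : Disjoint (Finset.univ.filter (fun i : Fin n => i < σ i))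
      (Finset.univ.filter (fun i => σ i < i)) := by
    refine Finset.disjoint_left.mpr ?_
    intro i hi hi'
    simp only [Finset.mem_filter, Finset.mem_univ, true_and] at hi hi'
    exact absurd hi' (not_lt.mpr hi.le)
  have h2 : (Finset.univ.filter (fun i : Fin n => i < σ i))
      ∪ (Finset.univ.filter (fun i => σ i < i)) = Finset.univ := by
    ext i
    simp only [Finset.mem_union, Finset.mem_filter, Finset.mem_univ, true_and, iff_true]
    rcases lt_trichotomy i (σ i) with h|h|h
    · exact Or.inl h
    · exact absurd h.symm (hfpf i)
    · exact Or.inr h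
  have := congrArg Finset.card h2
  rw [Finset.card_union_of_disjoint h3, Finset.card_univ, Fintype.card_fin, ← h1] at this
  omega

lemma odd_no_involution (hodd : Odd n) :
    Finset.univ.filter (fun σ : Equiv.Perm (Fin n) => σ * σ = 1 ∧ ∀ i, σ i ≠ i) = ∅ := by
  rw [Finset.eq_empty_iff_forall_notMem]
  intro σ hσ
  simp only [Finset.mem_filter, Finset.mem_univ, true_and] at hσ
  have := two_mul_card_filter_lt σ (invol_apply hσ.1) hσ.2
  rcases hodd with ⟨m, hm⟩
  omega

def flipE (r : ℕ) : Equiv.Perm (Fin r × Bool) :=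
  Equiv.prodCongr (Equiv.refl _) ⟨Bool.not, Bool.not, Bool.not_not, Bool.not_not⟩

@[simp] lemma flipE_apply (p : Fin r × Bool) : flipE r p = (p.1, !p.2) := rfl

noncomputable def PhiE (e : Fin r × Bool ≃ Fin n) : Equiv.Perm (Fin n) :=
  (e.symm.trans (flipE r)).trans e

lemma PhiE_apply (e : Fin r × Bool ≃ Fin n) (i : Fin n) :
    PhiE e i = e ((e.symm i).1, !(e.symm i).2) := rfl

lemma PhiE_e (e : Fin r × Bool ≃ Fin n) (p : Fin r × Bool) :
    PhiE e (e p) = e (p.1, !p.2) := by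
  rw [PhiE_apply, Equiv.symm_apply_apply]

lemma PhiE_eq_iff (e : Fin r × Bool ≃ Fin n) (σ : Equiv.Perm (Fin n)) :
    PhiE e = σ ↔ ∀ p : Fin r × Bool, e (p.1, !p.2) = σ (e p) := by
  constructor
  · intro h p
    rw [← PhiE_e e p, h]
  · intro h
    ext i
    rw [PhiE_apply]
    have := h (e.symm i)
    rw [Equiv.apply_symm_apply] at this
    rw [this]
  
lemma PhiE_invol (e : Fin r × Bool ≃ Fin n) : PhiE e * PhiE e = 1 := by
  ext i
  simp only [Equiv.Perm.mul_apply, Equiv.Perm.one_apply, PhiE_apply, Equiv.symm_apply_apply,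
    Bool.not_not, Prod.mk.eta, Equiv.apply_symm_apply]

lemma PhiE_fpf (e : Fin r × Bool ≃ Fin n) : ∀ i, PhiE e i ≠ i := by
  intro i h
  rw [PhiE_apply] at h
  conv_rhs at h => rw [← e.apply_symm_apply i]
  have := e.injective h
  have := congrArg Prod.snd this
  simp at this

end Involutions

section Fibers
variable {n r : ℕ}

lemma epair_ne (e : Fin r × Bool ≃ Fin n) (k : Fin r) : e (k, true) ≠ e (k, false) := by
  intro h
  simpa using congrArg Prod.snd (e.injective h)

lemma small_lt {σ : Equiv.Perm (Fin n)} (e : Fin r × Bool ≃ Fin n)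
    (he : ∀ p : Fin r × Bool, e (p.1, !p.2) = σ (e p)) (k : Fin r) :
    (if e (k,true) < e (k,false) then e (k,true) else e (k,false))
      < σ (if e (k,true) < e (k,false) then e (k,true) else e (k,false)) := by
  have hs1 : e (k, false) = σ (e (k,true)) := by simpa using he (k,true)
  have hs2 : e (k, true) = σ (e (k,false)) := by simpa using he (k,false)
  by_cases h : e (k,true) < e (k,false)
  · rw [if_pos h, ← hs1]; exact h
  · rw [if_neg h, ← hs2]
    exact lt_of_le_of_ne (not_lt.mp h) (epair_ne e k).symm

lemma fiber_prod {σ : Equiv.Perm (Fin n)} (e : Fin r × Bool ≃ Fin n)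
    (he : ∀ p : Fin r × Bool, e (p.1, !p.2) = σ (e p))
    (A : Fin n → Fin n → ℝ) (hA : ∀ i j, A i j = A j i) :
    ∏ k : Fin r, A (e (k,true)) (e (k,false))
      = ∏ i ∈ Finset.univ.filter (fun i => i < σ i), A i (σ i) := by
  have hs1 : ∀ k : Fin r, e (k, false) = σ (e (k,true)) := fun k => by simpa using he (k,true)
  have hs2 : ∀ k : Fin r, e (k, true) = σ (e (k,false)) := fun k => by simpa using he (k,false)
  refine Finset.prod_bij
    (fun k _ => if e (k,true) < e (k,false) then e (k,true) else e (k,false)) ?_ ?_ ?_ ?_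
  · intro k _
    simp only [Finset.mem_filter, Finset.mem_univ, true_and]
    exact small_lt e he k
  · intro a _ b _ hab
    have ha : (if e (a,true) < e (a,false) then e (a,true) else e (a,false)) = e (a, true)
        ∨ (if e (a,true) < e (a,false) then e (a,true) else e (a,false)) = e (a, false) := by
      split
      · exact Or.inl rfl
      · exact Or.inr rfl
    have hb : (if e (b,true) < e (b,false) then e (b,true) else e (b,false)) = e (b, true)
        ∨ (if e (b,true) < e (b,false) then e (b,true) else e (b,false)) = e (b, false) := by
      split
      · exact Or.inl rfl
      · exact Or.inr rfl
    rcases ha with ha | ha <;> rcases hb with hb | hb <;>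
      · rw [ha, hb] at hab
        exact congrArg Prod.fst (e.injective hab)
  · intro i hi
    simp only [Finset.mem_filter, Finset.mem_univ, true_and] at hi
    refine ⟨(e.symm i).1, Finset.mem_univ _, ?_⟩
    have hep : e ((e.symm i).1, (e.symm i).2) = i := by
      rw [Prod.mk.eta]; exact e.apply_symm_apply i
    cases hb : (e.symm i).2
    · -- e (k, false) = i, hence e (k,true) = σ i and σ i > i means no
      have h1 : e ((e.symm i).1, false) = i := by rw [← hb]; exact hep
      have h2 : e ((e.symm i).1, true) = σ i := by rw [hs2, h1]
      have hcond : ¬ (e ((e.symm i).1,true) < e ((e.symm i).1,false)) := by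
        rw [h1, h2]; exact not_lt.mpr hi.le
      rw [if_neg hcond, h1]
    · have h1 : e ((e.symm i).1, true) = i := by rw [← hb]; exact hep
      have h2 : e ((e.symm i).1, false) = σ i := by rw [hs1, h1]
      have hcond : e ((e.symm i).1,true) < e ((e.symm i).1,false) := by
        rw [h1, h2]; exact hi
      rw [if_pos hcond, h1]
  · intro k _
    by_cases h : e (k,true) < e (k,false)
    · rw [if_pos h, ← hs1 k]
    · rw [if_neg h, ← hs2 k]
      exact hA _ _

lemma fiber_card (hn : n = 2 * r) (σ : Equiv.Perm (Fin n)) (hσ2 : σ * σ = 1)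
    (hfpf : ∀ i, σ i ≠ i) :
    (Finset.univ.filter (fun e : Fin r × Bool ≃ Fin n => PhiE e = σ)).card
      = 2 ^ r * r.factorial := by
  have hσσ := invol_apply hσ2
  have hcard : Fintype.card {i : Fin n // i < σ i} = r := by
    rw [Fintype.card_subtype]
    have := two_mul_card_filter_lt σ hσσ hfpf
    omega
  obtain ⟨ι⟩ : Nonempty (Fin r ≃ {i : Fin n // i < σ i}) :=
    ⟨(Fintype.equivFinOfCardEq hcard).symm⟩
  set small : Fin r → Fin n := fun k => (ι k : Fin n) with hsmall
  have hsm : ∀ k, small k < σ (small k) := fun k => (ι k).2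
  have hsm' : ∀ k, ¬ (σ (small k) < σ (σ (small k))) := by
    intro k
    rw [hσσ]
    exact not_lt.mpr (hsm k).le
  have hsmallinj : Function.Injective small := by
    intro a b h
    exact ι.injective (Subtype.coe_injective h)
  set F : (Fin r → Bool) × Equiv.Perm (Fin r) → (Fin r × Bool → Fin n) :=
    fun bp p => if p.2 = bp.1 p.1 then small (bp.2 p.1) else σ (small (bp.2 p.1)) with hF
  have hFinj : ∀ bp, Function.Injective (F bp) := by
    intro bp p p' h
    simp only [hF] at h
    by_cases h1 : p.2 = bp.1 p.1 <;> by_cases h2 : p'.2 = bp.1 p'.1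
    · rw [if_pos h1, if_pos h2] at h
      have hk : p.1 = p'.1 := bp.2.injective (hsmallinj h)
      exact Prod.ext hk (by rw [h1, h2, hk])
    · rw [if_pos h1, if_neg h2] at h
      exact absurd ((h ▸ hsm (bp.2 p.1)) : σ (small (bp.2 p'.1)) < σ (σ (small (bp.2 p'.1)))) (hsm' _)
    · rw [if_neg h1, if_pos h2] at h
      exact absurd ((h.symm ▸ hsm (bp.2 p'.1)) : σ (small (bp.2 p.1)) < σ (σ (small (bp.2 p.1)))) (hsm' _)
    · rw [if_neg h1, if_neg h2] at h
      have hk : p.1 = p'.1 := bp.2.injective (hsmallinj (σ.injective h))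
      have hb : p.2 = p'.2 := by
        rcases Bool.eq_not_of_ne h1 with rfl2
        cases hp2 : p.2 <;> cases hp2' : p'.2 <;> simp_all
      exact Prod.ext hk hb
  have hFbij : ∀ bp, Function.Bijective (F bp) := by
    intro bp
    refine (Fintype.bijective_iff_injective_and_card _).mpr ⟨hFinj bp, ?_⟩
    simp [hn, Nat.mul_comm]
  have key := Finset.card_bij (s := (Finset.univ : Finset ((Fin r → Bool) × Equiv.Perm (Fin r))))
    (t := Finset.univ.filter (fun e : Fin r × Bool ≃ Fin n => PhiE e = σ))
    (fun bp _ => Equiv.ofBijective (F bp) (hFbij bp)) ?_ ?_ ?_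
  · rw [← key, Finset.card_univ, Fintype.card_prod, Fintype.card_fun, Fintype.card_perm]
    simp
  · intro bp _
    simp only [Finset.mem_filter, Finset.mem_univ, true_and]
    rw [PhiE_eq_iff]
    intro p
    show F bp (p.1, !p.2) = σ (F bp p)
    simp only [hF]
    by_cases h1 : p.2 = bp.1 p.1
    · rw [if_pos h1, if_neg (by rw [← h1]; cases p.2 <;> simp)]
    · rw [if_neg h1, if_pos (by rcases Bool.eq_not_of_ne h1 with h2; rw [h2]; simp), hσσ]
  · intro bp _ bp' _ heq
    have hfun : F bp = F bp' := by
      funext p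
      exact congrArg (fun (q : Fin r × Bool ≃ Fin n) => q p) heq
    have hb : bp.1 = bp'.1 := by
      funext k
      by_contra hne
      have := congrArg (fun f => f (k, bp.1 k)) hfun
      simp only [hF, eq_self_iff_true, if_true] at this
      rw [if_neg hne] at this
      exact absurd ((this ▸ hsm (bp.2 k)) : σ (small (bp'.2 k)) < σ (σ (small (bp'.2 k)))) (hsm' _)
    have hp : bp.2 = bp'.2 := by
      ext k
      · have := congrArg (fun f => f (k, bp.1 k)) hfun
        simp only [hF, eq_self_iff_true, if_true] at this
        rw [if_pos (by rw [hb])] at this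
        exact congrArg Fin.val (hsmallinj this)
    exact Prod.ext hb hp
  · intro e hee
    simp only [Finset.mem_filter, Finset.mem_univ, true_and] at hee
    have he : ∀ p : Fin r × Bool, e (p.1, !p.2) = σ (e p) := (PhiE_eq_iff e σ).mp hee
    have hs1 : ∀ k : Fin r, e (k, false) = σ (e (k,true)) := fun k => by simpa using he (k,true)
    have hs2 : ∀ k : Fin r, e (k, true) = σ (e (k,false)) := fun k => by simpa using he (k,false)
    set s : Fin r → Fin n := fun k => if e (k,true) < e (k,false) then e (k,true) else e (k,false) with hsdef
    have hsP : ∀ k, s k < σ (s k) := fun k => small_lt e he k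
    set b : Fin r → Bool := fun k => decide (e (k,true) < e (k,false)) with hbdef
    set pp0 : Fin r → Fin r := fun k => ι.symm ⟨s k, hsP k⟩ with hpp0
    have hpp0inj : Function.Injective pp0 := by
      intro a c h
      simp only [hpp0] at h
      have := congrArg (fun z => ((ι z : {i : Fin n // i < σ i}) : Fin n)) h
      simp only [Equiv.apply_symm_apply] at this
      -- s a = s c → a = c
      have hsac : s a = s c := this
      have ha : s a = e (a, true) ∨ s a = e (a, false) := by
        simp only [hsdef]; split
        · exact Or.inl rfl
        · exact Or.inr rfl
      have hc : s c = e (c, true) ∨ s c = e (c, false) := by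
        simp only [hsdef]; split
        · exact Or.inl rfl
        · exact Or.inr rfl
      rcases ha with ha | ha <;> rcases hc with hc | hc <;>
        · rw [ha, hc] at hsac
          exact congrArg Prod.fst (e.injective hsac)
    have hpp0bij : Function.Bijective pp0 := Finite.injective_iff_bijective.mp hpp0inj
    set tau : Equiv.Perm (Fin r) := Equiv.ofBijective pp0 hpp0bij with hppE
    have hsmalltau : ∀ k, small (tau k) = s k := by
      intro k
      show ((ι (pp0 k) : {i : Fin n // i < σ i}) : Fin n) = s k
      simp only [hpp0, Equiv.apply_symm_apply]
    refine ⟨(b, tau), Finset.mem_univ _, ?_⟩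
    ext p
    show Fin.val (F (b, tau) p) = Fin.val (e p)
    congr 1
    simp only [hF]
    rcases p with ⟨k, c⟩
    by_cases hlt : e (k,true) < e (k,false)
    · have hbk : b k = true := by simp [hbdef, hlt]
      have hsk : s k = e (k, true) := by simp [hsdef, hlt]
      cases c
      · rw [if_neg (by simp [hbk]), hsmalltau, hsk, ← hs1]
      · rw [if_pos (by simp [hbk]), hsmalltau, hsk]
    · have hbk : b k = false := by simp [hbdef, hlt]
      have hsk : s k = e (k, false) := by simp [hsdef, hlt]
      cases c
      · rw [if_pos (by simp [hbk]), hsmalltau, hsk]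
      · rw [if_neg (by simp [hbk]), hsmalltau, hsk, ← hs2]

end Fibers

lemma pairing_sum {n r : ℕ} (hn : n = 2 * r) (A : Fin n → Fin n → ℝ)
    (hA : ∀ i j, A i j = A j i) :
    ∑ T : Finset (Fin n), (-1:ℝ)^(n - T.card) * (∑ i ∈ T, ∑ j ∈ T, A i j)^r
    = (2^r * r.factorial : ℝ) *
      ∑ σ ∈ Finset.univ.filter (fun σ : Equiv.Perm (Fin n) => σ * σ = 1 ∧ ∀ i, σ i ≠ i),
        ∏ i ∈ Finset.univ.filter (fun i => i < σ i), A i (σ i) := by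
  have hexp : ∀ T : Finset (Fin n), (∑ i ∈ T, ∑ j ∈ T, A i j)^r
      = ∑ g ∈ Fintype.piFinset (fun _ : Fin r => T ×ˢ T), ∏ k, A (g k).1 (g k).2 := by
    intro T
    rw [← Finset.sum_product' T T (fun i j => A i j)]
    rw [show ((∑ q ∈ T ×ˢ T, A q.1 q.2) ^ r) = ∏ _k : Fin r, ∑ q ∈ T ×ˢ T, A q.1 q.2 by
      rw [Finset.prod_const, Finset.card_univ, Fintype.card_fin]]
    exact Finset.prod_univ_sum _ _
  simp_rw [hexp]
  have hswap : ∀ T : Finset (Fin n),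
      (-1:ℝ)^(n - T.card) * ∑ g ∈ Fintype.piFinset (fun _ : Fin r => T ×ˢ T), ∏ k, A (g k).1 (g k).2
      = ∑ g : Fin r → Fin n × Fin n,
          (if (Finset.image (fun k => (g k).1) Finset.univ ∪ Finset.image (fun k => (g k).2) Finset.univ) ⊆ T
            then (-1:ℝ)^(n - T.card) * ∏ k, A (g k).1 (g k).2 else 0) := by
    intro T
    rw [← Finset.sum_filter, Finset.mul_sum]
    refine (Finset.sum_congr ?_ (fun g _ => rfl))
    ext g
    simp [Fintype.mem_piFinset, Finset.mem_product, Finset.union_subset_iff,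
      Finset.image_subset_iff, forall_and]
  simp_rw [hswap]
  rw [Finset.sum_comm]
  have hinner : ∀ g : Fin r → Fin n × Fin n,
      ∑ T : Finset (Fin n),
        (if (Finset.image (fun k => (g k).1) Finset.univ ∪ Finset.image (fun k => (g k).2) Finset.univ) ⊆ T
          then (-1:ℝ)^(n - T.card) * ∏ k, A (g k).1 (g k).2 else 0)
      = (if (Finset.image (fun k => (g k).1) Finset.univ ∪ Finset.image (fun k => (g k).2) Finset.univ)
            = Finset.univ then 1 else 0) * ∏ k, A (g k).1 (g k).2 := by
    intro g
    rw [← alt_filter _, Finset.sum_mul]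
    exact Finset.sum_congr rfl (fun T _ => by rw [ite_mul, zero_mul])
  simp_rw [hinner, ite_mul, zero_mul, one_mul]
  rw [← Finset.sum_filter]
  -- reindex by equivalences e : Fin r × Bool ≃ Fin n
  have hbij : ∑ g ∈ Finset.univ.filter (fun g : Fin r → Fin n × Fin n =>
        (Finset.image (fun k => (g k).1) Finset.univ ∪ Finset.image (fun k => (g k).2) Finset.univ)
          = Finset.univ),
      ∏ k, A (g k).1 (g k).2
      = ∑ e : Fin r × Bool ≃ Fin n, ∏ k, A (e (k,true)) (e (k,false)) := by
    refine Finset.sum_bij (fun g hg => Equiv.ofBijective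
      (fun p : Fin r × Bool => cond p.2 (g p.1).1 (g p.1).2) ?_) ?_ ?_ ?_ ?_
    · simp only [Finset.mem_filter, Finset.mem_univ, true_and] at hg
      refine (Fintype.bijective_iff_surjective_and_card _).mpr ⟨?_, by simp [hn, Nat.mul_comm]⟩
      intro i
      have hiu : i ∈ (Finset.image (fun k => (g k).1) Finset.univ
          ∪ Finset.image (fun k => (g k).2) Finset.univ) := hg ▸ Finset.mem_univ i
      rcases Finset.mem_union.mp hiu with hi | hi
      · rcases Finset.mem_image.mp hi with ⟨k, _, hk⟩
        exact ⟨(k, true), hk⟩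
      · rcases Finset.mem_image.mp hi with ⟨k, _, hk⟩
        exact ⟨(k, false), hk⟩
    · intro g hg; exact Finset.mem_univ _
    · intro g1 h1 g2 h2 heq
      funext k
      have ht := congrArg (fun (q : Fin r × Bool ≃ Fin n) => q (k, true)) heq
      have hf := congrArg (fun (q : Fin r × Bool ≃ Fin n) => q (k, false)) heq
      exact Prod.ext ht hf
    · intro e _
      refine ⟨fun k => (e (k,true), e (k,false)), ?_, ?_⟩
      · simp only [Finset.mem_filter, Finset.mem_univ, true_and]
        ext i
        simp only [Finset.mem_union, Finset.mem_image, Finset.mem_univ, true_and, iff_true]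
        rcases hp : e.symm i with ⟨k, b⟩
        have : e (k, b) = i := by rw [← hp]; exact e.apply_symm_apply i
        cases b
        · exact Or.inr ⟨k, this⟩
        · exact Or.inl ⟨k, this⟩
      · ext p
        rcases p with ⟨k, c⟩
        cases c <;> rfl
    · intro g hg
      exact Finset.prod_congr rfl (fun k _ => rfl)
  rw [hbij]
  rw [← Finset.sum_fiberwise_of_maps_to (g := PhiE)
    (t := Finset.univ.filter (fun σ : Equiv.Perm (Fin n) => σ * σ = 1 ∧ ∀ i, σ i ≠ i))
    (fun e _ => by
      simp only [Finset.mem_filter, Finset.mem_univ, true_and]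
      exact ⟨PhiE_invol e, PhiE_fpf e⟩)]
  rw [Finset.mul_sum]
  refine Finset.sum_congr rfl (fun σ hσ => ?_)
  simp only [Finset.mem_filter, Finset.mem_univ, true_and] at hσ
  have hconst : ∀ e ∈ Finset.univ.filter (fun e : Fin r × Bool ≃ Fin n => PhiE e = σ),
      ∏ k, A (e (k,true)) (e (k,false))
        = ∏ i ∈ Finset.univ.filter (fun i => i < σ i), A i (σ i) := by
    intro e he
    simp only [Finset.mem_filter, Finset.mem_univ, true_and] at he
    exact fiber_prod e ((PhiE_eq_iff e σ).mp he) A hA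
  rw [Finset.sum_congr rfl hconst, Finset.sum_const, fiber_card hn σ hσ.1 hσ.2, nsmul_eq_mul]
  push_cast
  ring

lemma Gm_two : Gm 2 = 1 := by
  have := Gm_rec 0
  simpa [Gm_zero] using this

lemma Gm_even (r : ℕ) : Gm (2*r) * ((2:ℝ)^r * (r.factorial : ℝ)) = ((2*r).factorial : ℝ) := by
  induction r with
  | zero => simp [Gm_zero]
  | succ r ih =>
    have h1 : 2 * (r+1) = (2*r) + 2 := by ring
    rw [h1, Gm_rec, Nat.factorial_succ ((2*r) + 1), Nat.factorial_succ (2*r),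
      Nat.factorial_succ r, pow_succ]
    push_cast
    push_cast at ih
    linear_combination ((2*(r:ℝ)+1) * (2*((r:ℝ)+1))) * ih

lemma gaussian_map_moment {Ω : Type*} [MeasurableSpace Ω] {μ : Measure Ω}
    {S : Ω → ℝ} (hS : Measurable S) {v : ℝ≥0}
    (h : Measure.map S μ = gaussianReal 0 v) (k : ℕ) :
    Integrable (fun ω => S ω ^ k) μ ∧ ∫ ω, S ω ^ k ∂μ = (Real.sqrt v)^k * Gm k := by
  have haes : AEStronglyMeasurable (fun x : ℝ => x ^ k) (Measure.map S μ) := by fun_prop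
  constructor
  · exact (integrable_map_measure haes hS.aemeasurable).mp (h ▸ integrable_pow_gaussianReal v k)
  · calc ∫ ω, S ω ^ k ∂μ = ∫ x, x ^ k ∂(Measure.map S μ) :=
          (integral_map hS.aemeasurable haes).symm
    _ = (Real.sqrt v)^k * Gm k := by rw [h, integral_pow_gaussianReal]


/-- A centered jointly Gaussian vector: every finite linear combination is a
centered Gaussian random variable. -/
def IsCenteredGaussianVector {Ω : Type*} [MeasurableSpace Ω] (μ : Measure Ω)
    {n : ℕ} (X : Fin n → Ω → ℝ) : Prop :=
  ∀ c : Fin n → ℝ, ∃ v : NNReal,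
    Measure.map (fun ω => ∑ i, c i * X i ω) μ = gaussianReal 0 v

/-- **Isserlis' theorem**: the expectation of a product of centered jointly
Gaussian variables is the sum over all perfect matchings (encoded as
fixed-point-free involutions) of the products of pair covariances.
In particular, for an odd number of variables the expectation is zero. -/
theorem isserlis {Ω : Type*} [MeasurableSpace Ω] (μ : Measure Ω) [IsProbabilityMeasure μ]
    {n : ℕ} (X : Fin n → Ω → ℝ) (hmeas : ∀ i, Measurable (X i))
    (hX : IsCenteredGaussianVector μ X) :
    (∫ ω, ∏ i, X i ω ∂μ =
      ∑ σ ∈ Finset.univ.filter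
          (fun σ : Equiv.Perm (Fin n) => σ * σ = 1 ∧ ∀ i, σ i ≠ i),
        ∏ i ∈ Finset.univ.filter (fun i => i < σ i),
          ∫ ω, X i ω * X (σ i) ω ∂μ) ∧
    (Odd n → ∫ ω, ∏ i, X i ω ∂μ = 0) := by
  choose v hv using hX
  have hSmeas : ∀ c : Fin n → ℝ, Measurable (fun ω => ∑ i, c i * X i ω) := by
    intro c
    exact Finset.measurable_sum _ (fun i _ => (hmeas i).const_mul (c i))
  have hmom := fun (c : Fin n → ℝ) (k : ℕ) => gaussian_map_moment (hSmeas c) (hv c) k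
  -- characteristic vectors
  set χ : Finset (Fin n) → Fin n → ℝ := fun T i => if i ∈ T then 1 else 0 with hχ
  have hchi : ∀ (T : Finset (Fin n)) (ω : Ω), (∑ i, χ T i * X i ω) = ∑ i ∈ T, X i ω := by
    intro T ω
    simp only [hχ, ite_mul, one_mul, zero_mul]
    rw [Finset.sum_ite_mem, Finset.univ_inter]
  -- single and pair coefficient vectors
  set es : Fin n → Fin n → ℝ := fun i k => if k = i then 1 else 0 with hes
  have hesX : ∀ (i : Fin n) (ω : Ω), (∑ k, es i k * X k ω) = X i ω := by
    intro i ω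
    simp [hes, ite_mul, one_mul, zero_mul]
  set cp : Fin n → Fin n → Fin n → ℝ :=
    fun i j k => (if k = i then 1 else 0) + (if k = j then 1 else 0) with hcp
  have hcpX : ∀ (i j : Fin n) (ω : Ω), (∑ k, cp i j k * X k ω) = X i ω + X j ω := by
    intro i j ω
    simp [hcp, add_mul, Finset.sum_add_distrib, ite_mul, one_mul, zero_mul]
  -- integrability of products of two
  have hXiXj : ∀ i j : Fin n, Integrable (fun ω => X i ω * X j ω) μ := by
    intro i j
    have h1 : Integrable (fun ω => (X i ω + X j ω)^2) μ :=
      (hmom (cp i j) 2).1.congr (Eventually.of_forall fun ω => by dsimp only; rw [hcpX])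
    have h2 : Integrable (fun ω => (X i ω)^2) μ :=
      (hmom (es i) 2).1.congr (Eventually.of_forall fun ω => by dsimp only; rw [hesX])
    have h3 : Integrable (fun ω => (X j ω)^2) μ :=
      (hmom (es j) 2).1.congr (Eventually.of_forall fun ω => by dsimp only; rw [hesX])
    refine (((h1.sub h2).sub h3).div_const 2).congr (Eventually.of_forall fun ω => ?_)
    simp only [Pi.sub_apply]
    ring
  -- covariance identity
  have hSsq : ∀ c : Fin n → ℝ, ∫ ω, (∑ i, c i * X i ω)^2 ∂μ = ((v c : ℝ)) := by
    intro c
    rw [(hmom c 2).2, Real.sq_sqrt (v c).coe_nonneg, Gm_two, mul_one]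
  have hcov : ∀ c : Fin n → ℝ,
      ((v c : ℝ)) = ∑ i, ∑ j, c i * c j * ∫ ω, X i ω * X j ω ∂μ := by
    intro c
    rw [← hSsq c]
    have hpt : ∀ ω, (∑ i, c i * X i ω)^2 = ∑ i, ∑ j, (c i * c j) * (X i ω * X j ω) := by
      intro ω
      rw [sq, Finset.sum_mul_sum]
      exact Finset.sum_congr rfl fun i _ => Finset.sum_congr rfl fun j _ => by ring
    simp_rw [hpt]
    rw [integral_finset_sum _ (fun i _ =>
      integrable_finset_sum _ (fun j _ => (hXiXj i j).const_mul _))]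
    refine Finset.sum_congr rfl fun i _ => ?_
    rw [integral_finset_sum _ (fun j _ => (hXiXj i j).const_mul _)]
    exact Finset.sum_congr rfl fun j _ => integral_const_mul _ _
  -- subset variance
  have hvT : ∀ T : Finset (Fin n),
      ((v (χ T) : ℝ)) = ∑ i ∈ T, ∑ j ∈ T, ∫ ω, X i ω * X j ω ∂μ := by
    intro T
    rw [hcov (χ T)]
    have : ∀ i, ∑ j, χ T i * χ T j * ∫ ω, X i ω * X j ω ∂μ
        = if i ∈ T then ∑ j ∈ T, ∫ ω, X i ω * X j ω ∂μ else 0 := by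
      intro i
      by_cases hi : i ∈ T
      · rw [if_pos hi]
        simp only [hχ, if_pos hi, one_mul, ite_mul, zero_mul]
        rw [Finset.sum_ite_mem, Finset.univ_inter]
      · rw [if_neg hi]
        simp [hχ, if_neg hi]
    simp_rw [this]
    rw [Finset.sum_ite_mem, Finset.univ_inter]
  -- integrability of subset powers
  have hTint : ∀ T : Finset (Fin n), Integrable (fun ω => (∑ i ∈ T, X i ω)^n) μ :=
    fun T => (hmom (χ T) n).1.congr (Eventually.of_forall fun ω => by dsimp only; rw [hchi])
  have hTval : ∀ T : Finset (Fin n),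
      ∫ ω, (∑ i ∈ T, X i ω)^n ∂μ = (Real.sqrt (v (χ T)))^n * Gm n := by
    intro T
    rw [← (hmom (χ T) n).2]
    exact integral_congr_ae (Eventually.of_forall fun ω => by dsimp only; rw [hchi])
  -- polarization of the integral
  have hfacne : ((n.factorial : ℝ)) ≠ 0 := by positivity
  have hEeq : (n.factorial : ℝ) * ∫ ω, ∏ i, X i ω ∂μ
      = ∑ T : Finset (Fin n), (-1:ℝ)^(n - T.card) * ((Real.sqrt (v (χ T)))^n * Gm n) := by
    rw [← integral_const_mul]
    have hpt : ∀ ω, (n.factorial : ℝ) * ∏ i, X i ω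
        = ∑ T : Finset (Fin n), (-1:ℝ)^(n - T.card) * (∑ i ∈ T, X i ω)^n :=
      fun ω => (polarization n (fun i => X i ω)).symm
    simp_rw [hpt]
    rw [integral_finset_sum _ (fun T _ => (hTint T).const_mul _)]
    exact Finset.sum_congr rfl fun T _ => by rw [integral_const_mul, hTval]
  have hEodd : Odd n → ∫ ω, ∏ i, X i ω ∂μ = 0 := by
    intro hodd
    have h0 : (n.factorial : ℝ) * ∫ ω, ∏ i, X i ω ∂μ = 0 := by
      rw [hEeq]
      simp [Gm_odd hodd]
    exact (mul_eq_zero.mp h0).resolve_left hfacne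
  by_cases hpar : Odd n
  · refine ⟨?_, fun _ => hEodd hpar⟩
    rw [odd_no_involution hpar, Finset.sum_empty]
    exact hEodd hpar
  · have heven : Even n := Nat.not_odd_iff_even.mp hpar
    obtain ⟨r, hn2⟩ : ∃ r, n = 2 * r := by
      rcases heven with ⟨m, hm⟩
      exact ⟨m, by omega⟩
    refine ⟨?_, fun hodd => absurd hodd hpar⟩
    have hpow : ∀ T : Finset (Fin n),
        (Real.sqrt (v (χ T)))^n = ((v (χ T) : ℝ))^r := by
      intro T
      rw [hn2, pow_mul, Real.sq_sqrt (v (χ T)).coe_nonneg]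
    have hAsym : ∀ i j : Fin n, (∫ ω, X i ω * X j ω ∂μ) = ∫ ω, X j ω * X i ω ∂μ :=
      fun i j => integral_congr_ae (Eventually.of_forall fun ω => mul_comm _ _)
    have hkey : (n.factorial : ℝ) * ∫ ω, ∏ i, X i ω ∂μ
        = Gm n * ((2^r * r.factorial : ℝ) *
            ∑ σ ∈ Finset.univ.filter
              (fun σ : Equiv.Perm (Fin n) => σ * σ = 1 ∧ ∀ i, σ i ≠ i),
              ∏ i ∈ Finset.univ.filter (fun i => i < σ i),
                ∫ ω, X i ω * X (σ i) ω ∂μ) := by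
      rw [hEeq, ← pairing_sum hn2 (fun i j => ∫ ω, X i ω * X j ω ∂μ) hAsym,
        Finset.mul_sum]
      refine Finset.sum_congr rfl fun T _ => ?_
      rw [hpow, hvT]
      ring
    have hGmn : Gm n * ((2:ℝ)^r * r.factorial) = (n.factorial : ℝ) := by
      rw [hn2]
      exact Gm_even r
    rw [← mul_assoc, hGmn] at hkey
    exact mul_left_cancel₀ hfacne hkey
end

section
/- Cyclic-permutation formula for cumulants: let f̃ be a function on permutations multiplicative over cycle decomposition (f̃(σ) = ∏_j f̃(σ_j) for the cycle decomposition σ = σ_1⋯σ_l) and g: ℕ×ℕ → ℝ symmetric. Define F̃(B) = Σ_{σ ∈ S(B)} f̃(σ) ∏_{i∈B} g(i,σ(i)). Then the cumulant function k(A) = Σ_{π∈Π(A)} (|π|−1)!(−1)^{|π|−1} ∏_{B∈π} F̃(B) satisfies k(A) = Σ_{σ cyclic permutation of A} f̃(σ) ∏_{i∈A} g(i,σ(i)). -/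
open scoped BigOperators Classical

variable {n : ℕ}

/-- `F̃(B) = Σ_{σ ∈ S(B)} f̃(σ) ∏_{i∈B} g(i, σ i)`, the sum running over
permutations supported inside `B`. -/
noncomputable def permMoment (g : Fin n → Fin n → ℝ)
    (ft : Equiv.Perm (Fin n) → ℝ) (B : Finset (Fin n)) : ℝ :=
  ∑ σ ∈ Finset.univ.filter (fun σ : Equiv.Perm (Fin n) => ∀ i ∉ B, σ i = i),
    ft σ * ∏ i ∈ B, g i (σ i)

/-- The set partitions of a finite set `A`. -/
noncomputable def finsetPartitions (A : Finset (Fin n)) :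
    Finset (Finset (Finset (Fin n))) :=
  A.powerset.powerset.filter fun π =>
    (∀ B ∈ π, B.Nonempty) ∧ (∀ B ∈ π, ∀ C ∈ π, B ≠ C → Disjoint B C) ∧
      π.sup id = A

/-- The cumulant function of `F̃` via the moment-cumulant Möbius formula. -/
noncomputable def permCumulant (g : Fin n → Fin n → ℝ)
    (ft : Equiv.Perm (Fin n) → ℝ) (A : Finset (Fin n)) : ℝ :=
  ∑ π ∈ finsetPartitions A,
    ((π.card - 1).factorial : ℝ) * (-1 : ℝ) ^ (π.card - 1) *
      ∏ B ∈ π, permMoment g ft B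

/-- `σ` is a cyclic permutation of `A`: it fixes the complement of `A`
pointwise and acts transitively on `A` (a single cycle covering all of `A`). -/
def IsCyclicOn (σ : Equiv.Perm (Fin n)) (A : Finset (Fin n)) : Prop :=
  (∀ i ∉ A, σ i = i) ∧ ∀ x ∈ A, ∀ y ∈ A, ∃ m : ℕ, (σ ^ m) x = y

namespace CumulantAux

open Finset Equiv Equiv.Perm

lemma mem_parts {A : Finset (Fin n)} {π : Finset (Finset (Fin n))} :
    π ∈ finsetPartitions A ↔ (∀ B ∈ π, B ⊆ A) ∧ (∀ B ∈ π, B.Nonempty) ∧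
      (∀ B ∈ π, ∀ C ∈ π, B ≠ C → Disjoint B C) ∧ π.sup id = A := by
  simp only [finsetPartitions, Finset.mem_filter, Finset.mem_powerset, and_assoc]
  constructor
  · rintro ⟨h1, h2⟩ ; exact ⟨fun B hB => Finset.mem_powerset.1 (h1 hB), h2⟩
  · rintro ⟨h1, h2⟩ ; exact ⟨fun B hB => Finset.mem_powerset.2 (h1 B hB), h2⟩

lemma block_subset {A : Finset (Fin n)} {π} (hπ : π ∈ finsetPartitions A)
    {B} (hB : B ∈ π) : B ⊆ A := (mem_parts.1 hπ).1 B hB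

lemma block_nonempty {A : Finset (Fin n)} {π} (hπ : π ∈ finsetPartitions A)
    {B} (hB : B ∈ π) : B.Nonempty := (mem_parts.1 hπ).2.1 B hB

lemma block_disjoint {A : Finset (Fin n)} {π} (hπ : π ∈ finsetPartitions A)
    {B C} (hB : B ∈ π) (hC : C ∈ π) (h : B ≠ C) : Disjoint B C :=
  (mem_parts.1 hπ).2.2.1 B hB C hC h

lemma parts_sup {A : Finset (Fin n)} {π} (hπ : π ∈ finsetPartitions A) :
    π.sup id = A := (mem_parts.1 hπ).2.2.2

lemma exists_block {A : Finset (Fin n)} {π} (hπ : π ∈ finsetPartitions A)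
    {x : Fin n} (hx : x ∈ A) : ∃ B ∈ π, x ∈ B := by
  have := parts_sup hπ
  rw [← this] at hx
  simpa using (Finset.mem_sup.1 hx)

/-- The block of a partition containing `x`. -/
noncomputable def blockOf (π : Finset (Finset (Fin n))) (x : Fin n) : Finset (Fin n) :=
  if h : ∃ B ∈ π, x ∈ B then h.choose else ∅

lemma blockOf_spec {π : Finset (Finset (Fin n))} {x : Fin n} (h : ∃ B ∈ π, x ∈ B) :
    blockOf π x ∈ π ∧ x ∈ blockOf π x := by
  rw [blockOf, dif_pos h]
  exact ⟨h.choose_spec.1, h.choose_spec.2⟩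

lemma blockOf_mem {A : Finset (Fin n)} {π} (hπ : π ∈ finsetPartitions A)
    {x : Fin n} (hx : x ∈ A) : blockOf π x ∈ π := (blockOf_spec (exists_block hπ hx)).1

lemma mem_blockOf {A : Finset (Fin n)} {π} (hπ : π ∈ finsetPartitions A)
    {x : Fin n} (hx : x ∈ A) : x ∈ blockOf π x := (blockOf_spec (exists_block hπ hx)).2

lemma eq_blockOf {A : Finset (Fin n)} {π} (hπ : π ∈ finsetPartitions A)
    {x : Fin n} (hx : x ∈ A) {B} (hB : B ∈ π) (hxB : x ∈ B) : B = blockOf π x := by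
  by_contra hne
  exact Finset.disjoint_left.1
    (block_disjoint hπ hB (blockOf_mem hπ hx) hne) hxB (mem_blockOf hπ hx)

lemma not_mem_parts_self {A B : Finset (Fin n)} (hB : B.Nonempty)
    {π} (hπ : π ∈ finsetPartitions (A \ B)) : B ∉ π := by
  intro h
  have := block_subset hπ h
  obtain ⟨b, hb⟩ := hB
  exact (Finset.mem_sdiff.1 (this hb)).2 hb

lemma insert_mem_parts {A B : Finset (Fin n)} (hBA : B ⊆ A) (hB : B.Nonempty)
    {π} (hπ : π ∈ finsetPartitions (A \ B)) : insert B π ∈ finsetPartitions A := by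
  rw [mem_parts]
  refine ⟨?_, ?_, ?_, ?_⟩
  · intro C hC
    rcases Finset.mem_insert.1 hC with rfl | hC
    · exact hBA
    · exact (block_subset hπ hC).trans (Finset.sdiff_subset)
  · intro C hC
    rcases Finset.mem_insert.1 hC with rfl | hC
    · exact hB
    · exact block_nonempty hπ hC
  · intro C hC D hD hne
    have key : ∀ E ∈ π, Disjoint B E := by
      intro E hE
      have := block_subset hπ hE
      exact Finset.disjoint_left.2 fun a ha haE => (Finset.mem_sdiff.1 (this haE)).2 ha
    rcases Finset.mem_insert.1 hC with h1 | h1 <;> rcases Finset.mem_insert.1 hD with h2 | h2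
    · exact absurd (h1.trans h2.symm) hne
    · rw [h1]; exact key _ h2
    · rw [h2]; exact (key _ h1).symm
    · exact block_disjoint hπ h1 h2 hne
  · rw [Finset.sup_insert, parts_sup hπ, id]
    exact Finset.union_sdiff_of_subset hBA

lemma erase_mem_parts {A : Finset (Fin n)} {π} (hπ : π ∈ finsetPartitions A)
    {B} (hB : B ∈ π) : π.erase B ∈ finsetPartitions (A \ B) := by
  rw [mem_parts]
  have hdisj : Disjoint B ((π.erase B).sup id) := by
    rw [Finset.disjoint_sup_right]
    intro C hC
    exact block_disjoint hπ hB (Finset.mem_of_mem_erase hC)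
      (Ne.symm (Finset.ne_of_mem_erase hC))
  have hsup : B ∪ (π.erase B).sup id = A := by
    rw [← parts_sup hπ]
    conv_rhs => rw [← Finset.insert_erase hB]
    rw [Finset.sup_insert, id, Finset.sup_eq_union]
  refine ⟨?_, ?_, ?_, ?_⟩
  · intro C hC
    intro a ha
    rw [Finset.mem_sdiff]
    constructor
    · exact block_subset hπ (Finset.mem_of_mem_erase hC) ha
    · intro haB
      exact Finset.disjoint_left.1 (hdisj) haB (Finset.mem_sup.2 ⟨C, hC, ha⟩)
  · exact fun C hC => block_nonempty hπ (Finset.mem_of_mem_erase hC)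
  · exact fun C hC D hD hne =>
      block_disjoint hπ (Finset.mem_of_mem_erase hC) (Finset.mem_of_mem_erase hD) hne
  · rw [← hsup]
    exact (Finset.union_sdiff_cancel_left hdisj).symm

/-- Extraction of the block containing `x`: summing over partitions of `A`. -/
lemma sum_parts_extract {A : Finset (Fin n)} {x : Fin n} (hx : x ∈ A)
    (f : Finset (Finset (Fin n)) → ℝ) :
    ∑ T ∈ finsetPartitions A, f T
      = ∑ B ∈ A.powerset.filter (fun B => x ∈ B),
          ∑ T' ∈ finsetPartitions (A \ B), f (insert B T') := by
  rw [Finset.sum_sigma']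
  apply Finset.sum_nbij' (i := fun T => (⟨blockOf T x, T.erase (blockOf T x)⟩ :
      Σ _ : Finset (Fin n), Finset (Finset (Fin n))))
    (j := fun p => insert p.1 p.2)
  · intro T hT
    rw [Finset.mem_sigma]
    constructor
    · rw [Finset.mem_filter, Finset.mem_powerset]
      exact ⟨block_subset hT (blockOf_mem hT hx), mem_blockOf hT hx⟩
    · exact erase_mem_parts hT (blockOf_mem hT hx)
  · intro p hp
    rw [Finset.mem_sigma, Finset.mem_filter, Finset.mem_powerset] at hp
    exact insert_mem_parts hp.1.1 ⟨x, hp.1.2⟩ hp.2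
  · intro T hT
    exact Finset.insert_erase (blockOf_mem hT hx)
  · intro p hp
    rw [Finset.mem_sigma, Finset.mem_filter, Finset.mem_powerset] at hp
    have hBne : p.1.Nonempty := ⟨x, hp.1.2⟩
    have hmem : insert p.1 p.2 ∈ finsetPartitions A := insert_mem_parts hp.1.1 hBne hp.2
    have hb : blockOf (insert p.1 p.2) x = p.1 :=
      (eq_blockOf hmem hx (Finset.mem_insert_self _ _) hp.1.2).symm
    have : (insert p.1 p.2).erase (blockOf (insert p.1 p.2) x) = p.2 := by
      rw [hb, Finset.erase_insert (not_mem_parts_self hBne hp.2)]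
    exact Sigma.ext hb (heq_of_eq this)
  · intro T hT
    congr 1
    exact (Finset.insert_erase (blockOf_mem hT hx)).symm



lemma parts_empty : finsetPartitions (∅ : Finset (Fin n)) = {∅} := by
  ext π
  rw [Finset.mem_singleton, mem_parts]
  constructor
  · rintro ⟨h1, h2, _, _⟩
    rw [Finset.eq_empty_iff_forall_notMem]
    intro B hB
    obtain ⟨b, hb⟩ := h2 B hB
    exact absurd (h1 B hB hb) (Finset.notMem_empty b)
  · rintro rfl
    simp

lemma parts_ne_empty {A : Finset (Fin n)} (hA : A.Nonempty) {π}
    (hπ : π ∈ finsetPartitions A) : π.Nonempty := by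
  rcases Finset.eq_empty_or_nonempty π with rfl | h
  · have := parts_sup hπ
    simp only [Finset.sup_empty] at this
    rw [← this] at hA
    simp [Finset.bot_eq_empty] at hA
  · exact h

lemma parts_disjoint_of_subsets {D E : Finset (Fin n)} (hDE : Disjoint D E)
    {π ρ : Finset (Finset (Fin n))} (hπ : π ∈ finsetPartitions D)
    (hρ : ρ ∈ finsetPartitions E) : Disjoint π ρ := by
  rw [Finset.disjoint_left]
  intro B hBπ hBρ
  obtain ⟨b, hb⟩ := block_nonempty hπ hBπ
  exact Finset.disjoint_left.1 hDE (block_subset hπ hBπ hb) (block_subset hρ hBρ hb)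

lemma union_mem_parts {W D : Finset (Fin n)} (hD : D ⊆ W)
    {π ρ : Finset (Finset (Fin n))} (hπ : π ∈ finsetPartitions D)
    (hρ : ρ ∈ finsetPartitions (W \ D)) : π ∪ ρ ∈ finsetPartitions W := by
  have hcross : ∀ B ∈ π, ∀ C ∈ ρ, Disjoint B C := by
    intro B hB C hC
    refine Finset.disjoint_left.2 fun a ha haC => ?_
    exact (Finset.mem_sdiff.1 (block_subset hρ hC haC)).2 (block_subset hπ hB ha)
  rw [mem_parts]
  refine ⟨?_, ?_, ?_, ?_⟩
  · intro B hB
    rcases Finset.mem_union.1 hB with h | h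
    · exact (block_subset hπ h).trans hD
    · exact (block_subset hρ h).trans Finset.sdiff_subset
  · intro B hB
    rcases Finset.mem_union.1 hB with h | h
    · exact block_nonempty hπ h
    · exact block_nonempty hρ h
  · intro B hB C hC hne
    rcases Finset.mem_union.1 hB with h1 | h1 <;> rcases Finset.mem_union.1 hC with h2 | h2
    · exact block_disjoint hπ h1 h2 hne
    · exact hcross _ h1 _ h2
    · exact (hcross _ h2 _ h1).symm
    · exact block_disjoint hρ h1 h2 hne
  · rw [Finset.sup_union, parts_sup hπ, parts_sup hρ, Finset.sup_eq_union]
    exact Finset.union_sdiff_of_subset hD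

lemma subset_mem_parts {W : Finset (Fin n)} {ρ} (hρ : ρ ∈ finsetPartitions W)
    {sub} (hsub : sub ⊆ ρ) : sub ∈ finsetPartitions (sub.sup id) := by
  rw [mem_parts]
  exact ⟨fun B hB => Finset.le_sup (f := (id : Finset (Fin n) → Finset (Fin n))) hB,
    fun B hB => block_nonempty hρ (hsub hB),
    fun B hB C hC hne => block_disjoint hρ (hsub hB) (hsub hC) hne, rfl⟩

lemma sup_subset {W : Finset (Fin n)} {ρ} (hρ : ρ ∈ finsetPartitions W)
    {sub} (hsub : sub ⊆ ρ) : sub.sup id ⊆ W := by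
  rw [← parts_sup hρ]
  exact (Finset.sup_mono hsub : sub.sup id ≤ ρ.sup id)

lemma sdiff_mem_parts {W : Finset (Fin n)} {ρ} (hρ : ρ ∈ finsetPartitions W)
    {sub} (hsub : sub ⊆ ρ) : ρ \ sub ∈ finsetPartitions (W \ sub.sup id) := by
  have hdisj : Disjoint (sub.sup id) ((ρ \ sub).sup id) := by
    rw [Finset.disjoint_sup_right]
    intro C hC
    rw [Finset.disjoint_sup_left]
    intro B hB
    refine block_disjoint hρ (hsub hB) ((Finset.mem_sdiff.1 hC).1) ?_
    rintro rfl
    exact (Finset.mem_sdiff.1 hC).2 hB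
  have hsup : sub.sup id ∪ (ρ \ sub).sup id = W := by
    rw [← Finset.sup_eq_union, ← Finset.sup_union, Finset.union_sdiff_of_subset hsub]
    exact parts_sup hρ
  rw [mem_parts]
  refine ⟨?_, ?_, ?_, ?_⟩
  · intro C hC
    intro a ha
    rw [Finset.mem_sdiff]
    refine ⟨block_subset hρ (Finset.mem_sdiff.1 hC).1 ha, fun haD => ?_⟩
    exact Finset.disjoint_left.1 hdisj haD (Finset.mem_sup.2 ⟨C, hC, ha⟩)
  · exact fun C hC => block_nonempty hρ (Finset.mem_sdiff.1 hC).1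
  · exact fun B hB C hC hne =>
      block_disjoint hρ (Finset.mem_sdiff.1 hB).1 (Finset.mem_sdiff.1 hC).1 hne
  · rw [← hsup]
    exact (Finset.union_sdiff_cancel_left hdisj).symm

/-- Splitting a partition of `W` into a sub-collection of blocks and the rest. -/
lemma sum_split (W : Finset (Fin n))
    (f : Finset (Finset (Fin n)) → Finset (Finset (Fin n)) → ℝ) :
    ∑ D ∈ W.powerset, ∑ π ∈ finsetPartitions D,
        ∑ ρ' ∈ finsetPartitions (W \ D), f π ρ'
      = ∑ ρ ∈ finsetPartitions W, ∑ sub ∈ ρ.powerset, f sub (ρ \ sub) := by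
  have lhs : ∑ D ∈ W.powerset, ∑ π ∈ finsetPartitions D,
        ∑ ρ' ∈ finsetPartitions (W \ D), f π ρ'
      = ∑ p ∈ W.powerset.sigma
          (fun D => finsetPartitions D ×ˢ finsetPartitions (W \ D)),
          f p.2.1 p.2.2 := by
    rw [Finset.sum_sigma]
    exact Finset.sum_congr rfl fun D _ =>
      (Finset.sum_product (s := finsetPartitions D) (t := finsetPartitions (W \ D))
        (f := fun q => f q.1 q.2)).symm
  rw [lhs, Finset.sum_sigma']
  apply Finset.sum_nbij' (i := fun p => (⟨p.2.1 ∪ p.2.2, p.2.1⟩ :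
      Σ _ : Finset (Finset (Fin n)), Finset (Finset (Fin n))))
    (j := fun q => ⟨q.2.sup id, (q.2, q.1 \ q.2)⟩)
  · rintro ⟨D, π, ρ'⟩ hp
    rw [Finset.mem_sigma, Finset.mem_product] at hp
    obtain ⟨hD, hπ, hρ⟩ := hp
    rw [Finset.mem_sigma]
    exact ⟨union_mem_parts (Finset.mem_powerset.1 hD) hπ hρ,
      Finset.mem_powerset.2 Finset.subset_union_left⟩
  · rintro ⟨ρ, sub⟩ hq
    rw [Finset.mem_sigma] at hq
    obtain ⟨hρ, hsub⟩ := hq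
    rw [Finset.mem_powerset] at hsub
    rw [Finset.mem_sigma, Finset.mem_product]
    exact ⟨Finset.mem_powerset.2 (sup_subset hρ hsub),
      subset_mem_parts hρ hsub, sdiff_mem_parts hρ hsub⟩
  · rintro ⟨D, π, ρ'⟩ hp
    rw [Finset.mem_sigma, Finset.mem_product] at hp
    obtain ⟨hD, hπ, hρ⟩ := hp
    have h1 : π.sup id = D := parts_sup hπ
    have h2 : (π ∪ ρ') \ π = ρ' :=
      Finset.union_sdiff_cancel_left
        (parts_disjoint_of_subsets Finset.disjoint_sdiff hπ hρ)
    exact Sigma.ext h1 (by rw [h2])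
  · rintro ⟨ρ, sub⟩ hq
    rw [Finset.mem_sigma] at hq
    obtain ⟨hρ, hsub⟩ := hq
    rw [Finset.mem_powerset] at hsub
    exact Sigma.ext (Finset.union_sdiff_of_subset hsub) (by simp)
  · rintro ⟨D, π, ρ'⟩ hp
    rw [Finset.mem_sigma, Finset.mem_product] at hp
    obtain ⟨hD, hπ, hρ⟩ := hp
    have h2 : (π ∪ ρ') \ π = ρ' :=
      Finset.union_sdiff_cancel_left
        (parts_disjoint_of_subsets Finset.disjoint_sdiff hπ hρ)
    simp only [h2]

/-- Sum over cyclic permutations of `A`. -/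
noncomputable def cyc (g : Fin n → Fin n → ℝ) (ft : Equiv.Perm (Fin n) → ℝ)
    (A : Finset (Fin n)) : ℝ :=
  ∑ σ ∈ Finset.univ.filter (fun σ : Equiv.Perm (Fin n) => IsCyclicOn σ A),
    ft σ * ∏ i ∈ A, g i (σ i)

lemma support_subset_of_fixes {σ : Equiv.Perm (Fin n)} {A : Finset (Fin n)}
    (h : ∀ i ∉ A, σ i = i) : σ.support ⊆ A := by
  intro i hi
  by_contra hiA
  exact (Equiv.Perm.mem_support.1 hi) (h i hiA)

lemma ft_one {ft : Equiv.Perm (Fin n) → ℝ}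
    (hft : ∀ σ : Equiv.Perm (Fin n), ft σ = ∏ c ∈ σ.cycleFactorsFinset, ft c) :
    ft 1 = 1 := by
  rw [hft 1, Equiv.Perm.cycleFactorsFinset_one, Finset.prod_empty]

lemma isCyclicOn_cycleOf (σ : Equiv.Perm (Fin n)) (x : Fin n) :
    IsCyclicOn (σ.cycleOf x) (insert x (σ.cycleOf x).support) := by
  constructor
  · intro i hi
    apply Equiv.Perm.notMem_support.1
    exact fun h => hi (Finset.mem_insert_of_mem h)
  · intro a ha b hb
    by_cases hfix : σ x = x
    · have h1 : σ.cycleOf x = 1 := (Equiv.Perm.cycleOf_eq_one_iff σ).2 hfix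
      rw [h1, Equiv.Perm.support_one] at ha hb
      simp only [Finset.mem_insert, Finset.notMem_empty, or_false] at ha hb
      exact ⟨0, by rw [pow_zero, Equiv.Perm.one_apply, ha, hb]⟩
    · have hxs : x ∈ σ.support := Equiv.Perm.mem_support.2 hfix
      have hxsup : x ∈ (σ.cycleOf x).support :=
        Equiv.Perm.mem_support_cycleOf_iff.2 ⟨Equiv.Perm.SameCycle.refl _ _, hxs⟩
      have ha' : a ∈ (σ.cycleOf x).support := by
        rcases Finset.mem_insert.1 ha with rfl | h
        exacts [hxsup, h]
      have hb' : b ∈ (σ.cycleOf x).support := by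
        rcases Finset.mem_insert.1 hb with rfl | h
        exacts [hxsup, h]
      have hxa := (Equiv.Perm.mem_support_cycleOf_iff.1 ha').1
      have hxb := (Equiv.Perm.mem_support_cycleOf_iff.1 hb').1
      obtain ⟨m, -, -, hm⟩ := (hxa.symm.trans hxb).exists_pow_eq σ
      refine ⟨m, ?_⟩
      rw [hxa.cycleOf_eq, Equiv.Perm.cycleOf_pow_apply_self, hm]

lemma cycleOf_apply_of_mem {σ : Equiv.Perm (Fin n)} {x i : Fin n}
    (hi : i ∈ insert x (σ.cycleOf x).support) : σ.cycleOf x i = σ i := by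
  rcases Finset.mem_insert.1 hi with rfl | h
  · exact Equiv.Perm.cycleOf_apply_self σ i
  · exact (Equiv.Perm.mem_support_cycleOf_iff.1 h).1.cycleOf_apply

lemma rest_apply_of_mem {σ : Equiv.Perm (Fin n)} {x i : Fin n}
    (hi : i ∈ insert x (σ.cycleOf x).support) : (σ * (σ.cycleOf x)⁻¹) i = i := by
  by_cases hfix : σ x = x
  · have h1 : σ.cycleOf x = 1 := (Equiv.Perm.cycleOf_eq_one_iff σ).2 hfix
    rw [h1, Equiv.Perm.support_one] at hi
    simp only [Finset.mem_insert, Finset.notMem_empty, or_false] at hi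
    subst hi
    simp [h1, hfix]
  · have hxs : x ∈ σ.support := Equiv.Perm.mem_support.2 hfix
    have hi' : i ∈ (σ.cycleOf x).support := by
      rcases Finset.mem_insert.1 hi with rfl | h
      · exact Equiv.Perm.mem_support_cycleOf_iff.2 ⟨Equiv.Perm.SameCycle.refl _ _, hxs⟩
      · exact h
    have h2 : (σ.cycleOf x)⁻¹ i ∈ (σ.cycleOf x).support := by
      rw [← Equiv.Perm.support_inv]
      rw [← Equiv.Perm.support_inv] at hi'
      exact Equiv.Perm.apply_mem_support.2 hi'
    have h3 : σ.cycleOf x ((σ.cycleOf x)⁻¹ i) = σ ((σ.cycleOf x)⁻¹ i) :=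
      cycleOf_apply_of_mem (Finset.mem_insert_of_mem h2)
    calc (σ * (σ.cycleOf x)⁻¹) i = σ ((σ.cycleOf x)⁻¹ i) := rfl
    _ = σ.cycleOf x ((σ.cycleOf x)⁻¹ i) := h3.symm
    _ = i := Equiv.apply_symm_apply _ i

lemma rest_apply_of_not_mem {σ : Equiv.Perm (Fin n)} {x i : Fin n}
    (hi : i ∉ insert x (σ.cycleOf x).support) : (σ * (σ.cycleOf x)⁻¹) i = σ i := by
  have : i ∉ (σ.cycleOf x).support := fun h => hi (Finset.mem_insert_of_mem h)
  have h1 : (σ.cycleOf x)⁻¹ i = i := by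
    rw [← Equiv.Perm.notMem_support, Equiv.Perm.support_inv]
    exact this
  calc (σ * (σ.cycleOf x)⁻¹) i = σ ((σ.cycleOf x)⁻¹ i) := rfl
  _ = σ i := by rw [h1]

lemma ft_factor {ft : Equiv.Perm (Fin n) → ℝ}
    (hft : ∀ σ : Equiv.Perm (Fin n), ft σ = ∏ c ∈ σ.cycleFactorsFinset, ft c)
    (σ : Equiv.Perm (Fin n)) (x : Fin n) :
    ft σ = ft (σ.cycleOf x) * ft (σ * (σ.cycleOf x)⁻¹) := by
  by_cases hfix : σ x = x
  · have h1 : σ.cycleOf x = 1 := (Equiv.Perm.cycleOf_eq_one_iff σ).2 hfix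
    rw [h1, ft_one hft, inv_one, mul_one, one_mul]
  · have hxs : x ∈ σ.support := Equiv.Perm.mem_support.2 hfix
    have hmem : σ.cycleOf x ∈ σ.cycleFactorsFinset :=
      Equiv.Perm.cycleOf_mem_cycleFactorsFinset_iff.2 hxs
    have h2 : (σ * (σ.cycleOf x)⁻¹).cycleFactorsFinset
        = σ.cycleFactorsFinset \ {σ.cycleOf x} :=
      Equiv.Perm.cycleFactorsFinset_mul_inv_mem_eq_sdiff hmem
    rw [hft σ, hft (σ * (σ.cycleOf x)⁻¹), h2, Finset.sdiff_singleton_eq_erase,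
      Finset.mul_prod_erase _ _ hmem]

lemma isCyclicOn_singleton {τ : Equiv.Perm (Fin n)} {x : Fin n}
    (h : IsCyclicOn τ {x}) : τ = 1 := by
  have hx : τ x = x := by
    by_contra hne
    have h1 : τ (τ x) = τ x := h.1 _ (by simpa using fun hxx => hne (by rw [hxx]))
    exact hne (τ.injective h1)
  apply Equiv.ext
  intro i
  rw [Equiv.Perm.one_apply]
  by_cases hi : i = x
  · rw [hi, hx]
  · exact h.1 i (by simpa using hi)

lemma isCyclicOn_support_eq {τ : Equiv.Perm (Fin n)} {B : Finset (Fin n)}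
    (h : IsCyclicOn τ B) (hcard : 2 ≤ B.card) : τ.support = B := by
  apply Finset.Subset.antisymm (support_subset_of_fixes h.1)
  intro b hb
  obtain ⟨c, hc, hcb⟩ := Finset.exists_mem_ne hcard b
  rw [Equiv.Perm.mem_support]
  intro hfix
  obtain ⟨m, hm⟩ := h.2 b hb c hc
  have : ∀ k : ℕ, (τ ^ k) b = b := by
    intro k
    induction k with
    | zero => simp
    | succ k ih => rw [pow_succ, Equiv.Perm.mul_apply, hfix, ih]
  exact hcb (hm ▸ this m)

lemma isCyclicOn_isCycle {τ : Equiv.Perm (Fin n)} {B : Finset (Fin n)}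
    (h : IsCyclicOn τ B) (hcard : 2 ≤ B.card) {x : Fin n} (hx : x ∈ B) :
    τ.IsCycle := by
  have hsupp := isCyclicOn_support_eq h hcard
  refine ⟨x, ?_, ?_⟩
  · rw [← Equiv.Perm.mem_support, hsupp]; exact hx
  · intro b hb
    have hbB : b ∈ B := hsupp ▸ Equiv.Perm.mem_support.2 hb
    obtain ⟨m, hm⟩ := h.2 x hx b hbB
    exact ⟨(m : ℤ), by rw [zpow_natCast]; exact hm⟩

lemma mem_factors_of_cyclic {τ σ' : Equiv.Perm (Fin n)} {A B : Finset (Fin n)}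
    (h : IsCyclicOn τ B) (hcard : 2 ≤ B.card)
    (hσ' : ∀ i ∉ A \ B, σ' i = i) :
    τ ∈ (σ' * τ).cycleFactorsFinset := by
  rw [Equiv.Perm.mem_cycleFactorsFinset_iff]
  obtain ⟨b, hb⟩ := Finset.card_pos.1 (lt_of_lt_of_le two_pos hcard)
  refine ⟨isCyclicOn_isCycle h hcard hb, fun a ha => ?_⟩
  have h1 : τ a ∈ B := by
    rw [← isCyclicOn_support_eq h hcard]
    exact Equiv.Perm.apply_mem_support.2 ha
  have h2 : σ' (τ a) = τ a := hσ' _ (fun hm => (Finset.mem_sdiff.1 hm).2 h1)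
  rw [Equiv.Perm.mul_apply, h2]

lemma rev_roundtrip {τ σ' : Equiv.Perm (Fin n)} {A B : Finset (Fin n)} {x : Fin n}
    (hxB : x ∈ B) (h : IsCyclicOn τ B) (hσ' : ∀ i ∉ A \ B, σ' i = i) :
    (σ' * τ).cycleOf x = τ ∧ insert x ((σ' * τ).cycleOf x).support = B := by
  by_cases hcard : 2 ≤ B.card
  · have hmem := mem_factors_of_cyclic h hcard hσ'
    have hsupp := isCyclicOn_support_eq h hcard
    have hxsupp : x ∈ τ.support := hsupp ▸ hxB
    have h2 : (σ' * τ).cycleOf x = τ :=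
      (Equiv.Perm.cycle_is_cycleOf hxsupp hmem).symm
    refine ⟨h2, ?_⟩
    rw [h2, hsupp]
    exact Finset.insert_eq_self.2 hxB
  · have hB : B = {x} := by
      have h1 : B.card = 1 := by
        have := Finset.card_pos.2 ⟨x, hxB⟩
        omega
      obtain ⟨y, hy⟩ := Finset.card_eq_one.1 h1
      rw [hy] at hxB
      rw [hy, Finset.mem_singleton.1 hxB]
    subst hB
    have hτ : τ = 1 := isCyclicOn_singleton h
    have hσx : σ' x = x := hσ' x (fun hm => (Finset.mem_sdiff.1 hm).2 (Finset.mem_singleton_self x))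
    have hfix : (σ' * τ) x = x := by rw [hτ, mul_one, hσx]
    have h2 : (σ' * τ).cycleOf x = τ := by
      rw [(Equiv.Perm.cycleOf_eq_one_iff _).2 hfix, hτ]
    refine ⟨h2, ?_⟩
    rw [h2, hτ, Equiv.Perm.support_one]
    rfl

lemma moment_rec (g : Fin n → Fin n → ℝ) (ft : Equiv.Perm (Fin n) → ℝ)
    (hft : ∀ σ : Equiv.Perm (Fin n), ft σ = ∏ c ∈ σ.cycleFactorsFinset, ft c)
    {A : Finset (Fin n)} {x : Fin n} (hx : x ∈ A) :
    permMoment g ft A = ∑ B ∈ A.powerset.filter (fun B => x ∈ B),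
      cyc g ft B * permMoment g ft (A \ B) := by
  have rhs : ∑ B ∈ A.powerset.filter (fun B => x ∈ B),
        cyc g ft B * permMoment g ft (A \ B)
      = ∑ p ∈ (A.powerset.filter (fun B => x ∈ B)).sigma
          (fun B => (Finset.univ.filter (fun τ : Equiv.Perm (Fin n) => IsCyclicOn τ B)) ×ˢ
            (Finset.univ.filter (fun σ' : Equiv.Perm (Fin n) => ∀ i ∉ A \ B, σ' i = i))),
          (ft p.2.1 * ∏ i ∈ p.1, g i (p.2.1 i)) *
            (ft p.2.2 * ∏ i ∈ A \ p.1, g i (p.2.2 i)) := by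
    rw [Finset.sum_sigma]
    refine Finset.sum_congr rfl fun B _ => ?_
    rw [cyc, permMoment, Finset.sum_mul_sum]
    exact (Finset.sum_product
      (s := Finset.univ.filter (fun τ : Equiv.Perm (Fin n) => IsCyclicOn τ B))
      (t := Finset.univ.filter (fun σ' : Equiv.Perm (Fin n) => ∀ i ∉ A \ B, σ' i = i))
      (f := fun q => (ft q.1 * ∏ i ∈ B, g i (q.1 i)) *
        (ft q.2 * ∏ i ∈ A \ B, g i (q.2 i)))).symm
  rw [rhs, permMoment]
  apply Finset.sum_nbij'
    (i := fun σ => (⟨insert x (σ.cycleOf x).support, (σ.cycleOf x, σ * (σ.cycleOf x)⁻¹)⟩ :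
      Σ _ : Finset (Fin n), Equiv.Perm (Fin n) × Equiv.Perm (Fin n)))
    (j := fun p => p.2.2 * p.2.1)
  · -- forward membership
    intro σ hσ
    rw [Finset.mem_filter] at hσ
    have hσA : ∀ i ∉ A, σ i = i := hσ.2
    have hBA : insert x (σ.cycleOf x).support ⊆ A := by
      intro i hi
      rcases Finset.mem_insert.1 hi with rfl | h
      · exact hx
      · exact support_subset_of_fixes hσA (Equiv.Perm.support_cycleOf_le σ x h)
    rw [Finset.mem_sigma, Finset.mem_product]
    refine ⟨?_, ?_, ?_⟩
    · rw [Finset.mem_filter, Finset.mem_powerset]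
      exact ⟨hBA, Finset.mem_insert_self _ _⟩
    · rw [Finset.mem_filter]
      exact ⟨Finset.mem_univ _, isCyclicOn_cycleOf σ x⟩
    · rw [Finset.mem_filter]
      refine ⟨Finset.mem_univ _, fun i hi => ?_⟩
      by_cases hiB : i ∈ insert x (σ.cycleOf x).support
      · exact rest_apply_of_mem hiB
      · have hiA : i ∉ A := fun h => hi (Finset.mem_sdiff.2 ⟨h, hiB⟩)
        rw [rest_apply_of_not_mem hiB]
        exact hσA i hiA
  · -- backward membership
    rintro ⟨B, τ, σ'⟩ hp
    rw [Finset.mem_sigma, Finset.mem_product, Finset.mem_filter, Finset.mem_powerset,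
      Finset.mem_filter, Finset.mem_filter] at hp
    obtain ⟨⟨hBA, hxB⟩, ⟨-, hτ⟩, ⟨-, hσ'⟩⟩ := hp
    rw [Finset.mem_filter]
    refine ⟨Finset.mem_univ _, fun i hi => ?_⟩
    have hiB : i ∉ B := fun h => hi (hBA h)
    have h1 : τ i = i := hτ.1 i hiB
    have h2 : σ' i = i := hσ' i (fun h => hi (Finset.mem_sdiff.1 h).1)
    rw [Equiv.Perm.mul_apply, h1, h2]
  · -- left inverse
    intro σ hσ
    simp only
    exact inv_mul_cancel_right σ (σ.cycleOf x)
  · -- right inverse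
    rintro ⟨B, τ, σ'⟩ hp
    rw [Finset.mem_sigma, Finset.mem_product, Finset.mem_filter, Finset.mem_powerset,
      Finset.mem_filter, Finset.mem_filter] at hp
    obtain ⟨⟨hBA, hxB⟩, ⟨-, hτ⟩, ⟨-, hσ'⟩⟩ := hp
    obtain ⟨h2, h1⟩ := rev_roundtrip hxB hτ hσ'
    exact Sigma.ext h1 (heq_of_eq (by rw [h2, mul_inv_cancel_right]))
  · -- value equality
    intro σ hσ
    rw [Finset.mem_filter] at hσ
    have hσA : ∀ i ∉ A, σ i = i := hσ.2
    have hBA : insert x (σ.cycleOf x).support ⊆ A := by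
      intro i hi
      rcases Finset.mem_insert.1 hi with rfl | h
      · exact hx
      · exact support_subset_of_fixes hσA (Equiv.Perm.support_cycleOf_le σ x h)
    simp only
    rw [ft_factor hft σ x, ← Finset.prod_sdiff hBA]
    have e1 : ∏ i ∈ insert x (σ.cycleOf x).support, g i (σ i)
        = ∏ i ∈ insert x (σ.cycleOf x).support, g i (σ.cycleOf x i) :=
      Finset.prod_congr rfl fun i hi => by rw [cycleOf_apply_of_mem hi]
    have e2 : ∏ i ∈ A \ insert x (σ.cycleOf x).support, g i (σ i)
        = ∏ i ∈ A \ insert x (σ.cycleOf x).support, g i ((σ * (σ.cycleOf x)⁻¹) i) :=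
      Finset.prod_congr rfl fun i hi => by
        rw [rest_apply_of_not_mem (Finset.mem_sdiff.1 hi).2]
    rw [e1, e2]
    ring

lemma filter_fix_empty :
    Finset.univ.filter (fun σ : Equiv.Perm (Fin n) =>
      ∀ i ∉ (∅ : Finset (Fin n)), σ i = i) = {1} := by
  ext σ
  simp only [Finset.mem_filter, Finset.mem_univ, true_and, Finset.notMem_empty,
    not_false_iff, forall_true_left, Finset.mem_singleton]
  constructor
  · intro h
    exact Equiv.ext fun i => (h i)
  · rintro rfl i
    rfl

lemma moment_empty {g : Fin n → Fin n → ℝ} {ft : Equiv.Perm (Fin n) → ℝ}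
    (hft : ∀ σ : Equiv.Perm (Fin n), ft σ = ∏ c ∈ σ.cycleFactorsFinset, ft c) :
    permMoment g ft (∅ : Finset (Fin n)) = 1 := by
  rw [permMoment, filter_fix_empty, Finset.sum_singleton, Finset.prod_empty, mul_one,
    ft_one hft]

lemma cyc_empty {g : Fin n → Fin n → ℝ} {ft : Equiv.Perm (Fin n) → ℝ}
    (hft : ∀ σ : Equiv.Perm (Fin n), ft σ = ∏ c ∈ σ.cycleFactorsFinset, ft c) :
    cyc g ft (∅ : Finset (Fin n)) = 1 := by
  have h : Finset.univ.filter (fun σ : Equiv.Perm (Fin n) =>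
      IsCyclicOn σ (∅ : Finset (Fin n))) = {1} := by
    ext σ
    simp only [Finset.mem_filter, Finset.mem_univ, true_and, Finset.mem_singleton,
      IsCyclicOn, Finset.notMem_empty, not_false_iff, forall_true_left]
    constructor
    · rintro ⟨h1, -⟩
      exact Equiv.ext fun i => h1 i
    · rintro rfl
      exact ⟨fun i => rfl, by simp⟩
  rw [cyc, h, Finset.sum_singleton, Finset.prod_empty, mul_one, ft_one hft]

lemma moment_eq_sum_parts (g : Fin n → Fin n → ℝ) (ft : Equiv.Perm (Fin n) → ℝ)
    (hft : ∀ σ : Equiv.Perm (Fin n), ft σ = ∏ c ∈ σ.cycleFactorsFinset, ft c)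
    (A : Finset (Fin n)) :
    permMoment g ft A = ∑ T ∈ finsetPartitions A, ∏ C ∈ T, cyc g ft C := by
  induction A using Finset.strongInductionOn with
  | _ A ih =>
    rcases A.eq_empty_or_nonempty with rfl | hA
    · rw [moment_empty hft, parts_empty]
      simp
    · obtain ⟨x, hx⟩ := hA
      rw [moment_rec g ft hft hx,
        sum_parts_extract hx (fun T => ∏ C ∈ T, cyc g ft C)]
      refine Finset.sum_congr rfl fun B hB => ?_
      rw [Finset.mem_filter, Finset.mem_powerset] at hB
      have hssub : A \ B ⊂ A := Finset.sdiff_ssubset hB.1 ⟨x, hB.2⟩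
      rw [ih _ hssub, Finset.mul_sum]
      refine Finset.sum_congr rfl fun T' hT' => ?_
      rw [Finset.prod_insert (not_mem_parts_self ⟨x, hB.2⟩ hT')]

lemma sum_subset_reindex {A : Finset (Fin n)} {x : Fin n} (hx : x ∈ A)
    (h : Finset (Fin n) → Finset (Fin n) → ℝ) :
    ∑ B ∈ A.powerset.filter (fun B => x ∈ B),
        ∑ C ∈ B.powerset.filter (fun C => x ∈ C), h C (B \ C)
      = ∑ C ∈ A.powerset.filter (fun C => x ∈ C),
          ∑ D ∈ (A \ C).powerset, h C D := by
  rw [Finset.sum_sigma', Finset.sum_sigma']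
  apply Finset.sum_nbij' (i := fun p => (⟨p.2, p.1 \ p.2⟩ :
      Σ _ : Finset (Fin n), Finset (Fin n)))
    (j := fun q => ⟨q.1 ∪ q.2, q.1⟩)
  · rintro ⟨B, C⟩ hp
    rw [Finset.mem_sigma, Finset.mem_filter, Finset.mem_filter,
      Finset.mem_powerset, Finset.mem_powerset] at hp
    obtain ⟨⟨hBA, hxB⟩, hCB, hxC⟩ := hp
    rw [Finset.mem_sigma, Finset.mem_filter, Finset.mem_powerset, Finset.mem_powerset]
    exact ⟨⟨hCB.trans hBA, hxC⟩, Finset.sdiff_subset_sdiff hBA le_rfl⟩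
  · rintro ⟨C, D⟩ hq
    rw [Finset.mem_sigma, Finset.mem_filter, Finset.mem_powerset,
      Finset.mem_powerset] at hq
    obtain ⟨⟨hCA, hxC⟩, hD⟩ := hq
    rw [Finset.mem_sigma, Finset.mem_filter, Finset.mem_powerset, Finset.mem_filter,
      Finset.mem_powerset]
    exact ⟨⟨Finset.union_subset hCA (hD.trans Finset.sdiff_subset),
      Finset.mem_union_left _ hxC⟩, Finset.subset_union_left, hxC⟩
  · rintro ⟨B, C⟩ hp
    rw [Finset.mem_sigma, Finset.mem_filter, Finset.mem_filter,
      Finset.mem_powerset, Finset.mem_powerset] at hp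
    obtain ⟨⟨hBA, hxB⟩, hCB, hxC⟩ := hp
    exact Sigma.ext (Finset.union_sdiff_of_subset hCB) (by simp)
  · rintro ⟨C, D⟩ hq
    rw [Finset.mem_sigma, Finset.mem_filter, Finset.mem_powerset,
      Finset.mem_powerset] at hq
    obtain ⟨⟨hCA, hxC⟩, hD⟩ := hq
    have hdisj : Disjoint C D := Finset.disjoint_left.2 fun a ha haD =>
      (Finset.mem_sdiff.1 (hD haD)).2 ha
    exact Sigma.ext rfl (heq_of_eq (by rw [Finset.union_sdiff_cancel_left hdisj]))
  · rintro ⟨B, C⟩ hp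
    rfl

lemma sum_powerset_pow {ρ : Finset (Finset (Fin n))} (t : ℝ) :
    ∑ sub ∈ ρ.powerset, (t - 1) ^ (ρ \ sub).card = t ^ ρ.card := by
  have h := Finset.prod_add (fun _ : Finset (Fin n) => (1 : ℝ))
    (fun _ : Finset (Fin n) => t - 1) ρ
  simp only [Finset.prod_const_one, one_mul, Finset.prod_const] at h
  have h2 : (1 : ℝ) + (t - 1) = t := by ring
  rw [h2] at h
  exact h.symm

lemma sum_moment_R (g : Fin n → Fin n → ℝ) (ft : Equiv.Perm (Fin n) → ℝ)
    (hft : ∀ σ : Equiv.Perm (Fin n), ft σ = ∏ c ∈ σ.cycleFactorsFinset, ft c)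
    (W : Finset (Fin n)) (t : ℝ) :
    ∑ D ∈ W.powerset, permMoment g ft D *
        (∑ ρ' ∈ finsetPartitions (W \ D), (t - 1) ^ ρ'.card * ∏ C ∈ ρ', cyc g ft C)
      = ∑ ρ ∈ finsetPartitions W, t ^ ρ.card * ∏ C ∈ ρ, cyc g ft C := by
  have step1 : ∀ D ∈ W.powerset, permMoment g ft D *
        (∑ ρ' ∈ finsetPartitions (W \ D), (t - 1) ^ ρ'.card * ∏ C ∈ ρ', cyc g ft C)
      = ∑ π ∈ finsetPartitions D, ∑ ρ' ∈ finsetPartitions (W \ D),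
          (∏ C ∈ π, cyc g ft C) * ((t - 1) ^ ρ'.card * ∏ C ∈ ρ', cyc g ft C) := by
    intro D _
    rw [moment_eq_sum_parts g ft hft D, Finset.sum_mul_sum]
  rw [Finset.sum_congr rfl step1, sum_split W
    (fun π ρ' => (∏ C ∈ π, cyc g ft C) * ((t - 1) ^ ρ'.card * ∏ C ∈ ρ', cyc g ft C))]
  refine Finset.sum_congr rfl fun ρ hρ => ?_
  have step2 : ∀ sub ∈ ρ.powerset,
      (∏ C ∈ sub, cyc g ft C) * ((t - 1) ^ (ρ \ sub).card * ∏ C ∈ ρ \ sub, cyc g ft C)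
      = (t - 1) ^ (ρ \ sub).card * ∏ C ∈ ρ, cyc g ft C := by
    intro sub hsub
    rw [Finset.mem_powerset] at hsub
    rw [← Finset.prod_sdiff hsub]
    ring
  rw [Finset.sum_congr rfl step2, ← Finset.sum_mul, sum_powerset_pow]

lemma claimG (g : Fin n → Fin n → ℝ) (ft : Equiv.Perm (Fin n) → ℝ)
    (hft : ∀ σ : Equiv.Perm (Fin n), ft σ = ∏ c ∈ σ.cycleFactorsFinset, ft c)
    (A : Finset (Fin n)) :
    ∀ t : ℝ,
    ∑ π ∈ finsetPartitions A,
        (∏ i ∈ Finset.range π.card, (t - i)) * ∏ B ∈ π, permMoment g ft B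
      = ∑ ρ ∈ finsetPartitions A, t ^ ρ.card * ∏ C ∈ ρ, cyc g ft C := by
  induction A using Finset.strongInductionOn with
  | _ A ih =>
    intro t
    rcases A.eq_empty_or_nonempty with rfl | hA
    · rw [parts_empty]
      simp
    · obtain ⟨x, hx⟩ := hA
      rw [sum_parts_extract hx (fun π =>
        (∏ i ∈ Finset.range π.card, (t - i)) * ∏ B ∈ π, permMoment g ft B)]
      rw [sum_parts_extract hx (fun ρ => t ^ ρ.card * ∏ C ∈ ρ, cyc g ft C)]
      have L1 : ∀ B ∈ A.powerset.filter (fun B => x ∈ B),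
          ∑ π' ∈ finsetPartitions (A \ B),
            (∏ i ∈ Finset.range (insert B π').card, (t - i)) *
              ∏ B' ∈ insert B π', permMoment g ft B'
          = t * (permMoment g ft B *
              ∑ ρ' ∈ finsetPartitions (A \ B),
                (t - 1) ^ ρ'.card * ∏ C ∈ ρ', cyc g ft C) := by
        intro B hB
        rw [Finset.mem_filter, Finset.mem_powerset] at hB
        have hBne : B.Nonempty := ⟨x, hB.2⟩
        have hssub : A \ B ⊂ A := Finset.sdiff_ssubset hB.1 hBne
        have term : ∀ π' ∈ finsetPartitions (A \ B),
            (∏ i ∈ Finset.range (insert B π').card, (t - i)) *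
              ∏ B' ∈ insert B π', permMoment g ft B'
            = t * (permMoment g ft B *
                ((∏ i ∈ Finset.range π'.card, ((t - 1) - i)) *
                  ∏ B' ∈ π', permMoment g ft B')) := by
          intro π' hπ'
          have hnm : B ∉ π' := not_mem_parts_self hBne hπ'
          rw [Finset.card_insert_of_notMem hnm, Finset.prod_insert hnm,
            Finset.prod_range_succ']
          have cast1 : ∀ i ∈ Finset.range π'.card,
              (t - ((i : ℝ) + 1)) = ((t - 1) - i) := by
            intro i _
            ring
          have cast2 : ∏ i ∈ Finset.range π'.card, (t - ((i + 1 : ℕ) : ℝ))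
              = ∏ i ∈ Finset.range π'.card, ((t - 1) - i) := by
            refine Finset.prod_congr rfl fun i hi => ?_
            push_cast
            ring
          rw [cast2]
          ring
        rw [Finset.sum_congr rfl term, ← Finset.mul_sum, ← Finset.mul_sum,
          ih _ hssub (t - 1)]
      have R1 : ∀ C ∈ A.powerset.filter (fun C => x ∈ C),
          ∑ ρ' ∈ finsetPartitions (A \ C),
            t ^ (insert C ρ').card * ∏ C' ∈ insert C ρ', cyc g ft C'
          = t * (cyc g ft C *
              ∑ ρ' ∈ finsetPartitions (A \ C),
                t ^ ρ'.card * ∏ C' ∈ ρ', cyc g ft C') := by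
        intro C hC
        rw [Finset.mem_filter, Finset.mem_powerset] at hC
        have hCne : C.Nonempty := ⟨x, hC.2⟩
        have term : ∀ ρ' ∈ finsetPartitions (A \ C),
            t ^ (insert C ρ').card * ∏ C' ∈ insert C ρ', cyc g ft C'
            = t * (cyc g ft C * (t ^ ρ'.card * ∏ C' ∈ ρ', cyc g ft C')) := by
          intro ρ' hρ'
          have hnm : C ∉ ρ' := not_mem_parts_self hCne hρ'
          rw [Finset.card_insert_of_notMem hnm, Finset.prod_insert hnm, pow_succ]
          ring
        rw [Finset.sum_congr rfl term, ← Finset.mul_sum, ← Finset.mul_sum]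
      rw [Finset.sum_congr rfl L1, Finset.sum_congr rfl R1]
      -- now reduce to the reindexed identity
      have sd : ∀ B C : Finset (Fin n), C ⊆ B → A \ B = (A \ C) \ (B \ C) := by
        intro B C hCB
        ext a
        simp only [Finset.mem_sdiff]
        constructor
        · rintro ⟨ha, hb⟩
          exact ⟨⟨ha, fun hc => hb (hCB hc)⟩, fun h => hb h.1⟩
        · rintro ⟨⟨ha, hc⟩, h⟩
          refine ⟨ha, fun hb => h ⟨hb, hc⟩⟩
      have L2 : ∀ B ∈ A.powerset.filter (fun B => x ∈ B),
          t * (permMoment g ft B *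
              ∑ ρ' ∈ finsetPartitions (A \ B),
                (t - 1) ^ ρ'.card * ∏ C ∈ ρ', cyc g ft C)
          = ∑ C ∈ B.powerset.filter (fun C => x ∈ C),
              t * (cyc g ft C * (permMoment g ft (B \ C) *
                ∑ ρ' ∈ finsetPartitions ((A \ C) \ (B \ C)),
                  (t - 1) ^ ρ'.card * ∏ C' ∈ ρ', cyc g ft C')) := by
        intro B hB
        rw [Finset.mem_filter, Finset.mem_powerset] at hB
        rw [moment_rec g ft hft hB.2, Finset.sum_mul, Finset.mul_sum]
        refine Finset.sum_congr rfl fun C hC => ?_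
        rw [Finset.mem_filter, Finset.mem_powerset] at hC
        rw [← sd B C hC.1]
        ring
      rw [Finset.sum_congr rfl L2,
        sum_subset_reindex hx (fun C D => t * (cyc g ft C * (permMoment g ft D *
          ∑ ρ' ∈ finsetPartitions ((A \ C) \ D),
            (t - 1) ^ ρ'.card * ∏ C' ∈ ρ', cyc g ft C')))]
      refine Finset.sum_congr rfl fun C hC => ?_
      rw [← Finset.mul_sum, ← Finset.mul_sum, sum_moment_R g ft hft (A \ C) t]

lemma prod_eq_fact : ∀ m : ℕ, ∏ i ∈ Finset.range m, ((0:ℝ) - 1 - i)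
    = (m.factorial : ℝ) * (-1 : ℝ) ^ m := by
  intro m
  induction m with
  | zero => simp
  | succ m ih =>
    rw [Finset.prod_range_succ, ih, Nat.factorial_succ]
    push_cast
    ring

lemma singleton_mem_parts {A : Finset (Fin n)} (hA : A.Nonempty) :
    {A} ∈ finsetPartitions A := by
  rw [mem_parts]
  refine ⟨?_, ?_, ?_, ?_⟩
  · intro B hB; rw [Finset.mem_singleton] at hB; rw [hB]
  · intro B hB; rw [Finset.mem_singleton] at hB; rw [hB]; exact hA
  · intro B hB C hC hne
    rw [Finset.mem_singleton] at hB hC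
    exact absurd (hB.trans hC.symm) hne
  · exact Finset.sup_singleton

lemma parts_card_eq_one {A : Finset (Fin n)} {ρ} (hρ : ρ ∈ finsetPartitions A)
    (h : ρ.card = 1) : ρ = {A} := by
  obtain ⟨B, hB⟩ := Finset.card_eq_one.1 h
  have h2 := parts_sup hρ
  rw [hB, Finset.sup_singleton] at h2
  have h3 : B = A := h2
  rw [hB, h3]

theorem cumulant_cyclic_aux (g : Fin n → Fin n → ℝ) (ft : Equiv.Perm (Fin n) → ℝ)
    (hft : ∀ σ : Equiv.Perm (Fin n), ft σ = ∏ c ∈ σ.cycleFactorsFinset, ft c)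
    (A : Finset (Fin n)) :
    permCumulant g ft A = cyc g ft A := by
  rcases A.eq_empty_or_nonempty with rfl | hA
  · rw [cyc_empty hft, permCumulant, parts_empty]
    simp
  · set u : ℝ → ℝ := fun t => ∑ π ∈ finsetPartitions A,
      (∏ i ∈ Finset.range (π.card - 1), (t - 1 - i)) * ∏ B ∈ π, permMoment g ft B
      with hu_def
    set v : ℝ → ℝ := fun t => ∑ ρ ∈ finsetPartitions A,
      t ^ (ρ.card - 1) * ∏ C ∈ ρ, cyc g ft C with hv_def
    have hcard : ∀ π ∈ finsetPartitions A, 1 ≤ π.card := fun π hπ =>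
      Finset.card_pos.2 (parts_ne_empty hA hπ)
    have huv : ∀ t : ℝ, t ≠ 0 → u t = v t := by
      intro t ht
      apply mul_left_cancel₀ ht
      have hL : t * u t = ∑ π ∈ finsetPartitions A,
          (∏ i ∈ Finset.range π.card, (t - i)) * ∏ B ∈ π, permMoment g ft B := by
        rw [hu_def]
        simp only
        rw [Finset.mul_sum]
        refine Finset.sum_congr rfl fun π hπ => ?_
        have hm : π.card = (π.card - 1) + 1 := by
          have := hcard π hπ
          omega
        rw [hm, Finset.prod_range_succ']
        have : ∀ i ∈ Finset.range (π.card - 1), (t - ((i + 1 : ℕ) : ℝ)) = t - 1 - i := by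
          intro i _
          push_cast
          ring
        rw [Finset.prod_congr rfl this]
        push_cast
        ring
      have hR : t * v t = ∑ ρ ∈ finsetPartitions A,
          t ^ ρ.card * ∏ C ∈ ρ, cyc g ft C := by
        rw [hv_def]
        simp only
        rw [Finset.mul_sum]
        refine Finset.sum_congr rfl fun ρ hρ => ?_
        have hm : ρ.card = (ρ.card - 1) + 1 := by
          have := hcard ρ hρ
          omega
        rw [← mul_assoc, ← pow_succ', ← hm]
      rw [hL, hR, claimG g ft hft A t]
    have hu : Continuous u := by
      rw [hu_def]
      refine continuous_finset_sum _ fun π _ => ?_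
      refine Continuous.mul ?_ continuous_const
      refine continuous_finset_prod _ fun i _ => ?_
      exact (continuous_id.sub continuous_const).sub continuous_const
    have hv : Continuous v := by
      rw [hv_def]
      refine continuous_finset_sum _ fun ρ _ => ?_
      exact (continuous_pow _).mul continuous_const
    have h0 : u 0 = v 0 := by
      have h1 : Filter.Tendsto u (nhdsWithin (0:ℝ) ({0}ᶜ : Set ℝ)) (nhds (u 0)) :=
        (hu.tendsto 0).mono_left nhdsWithin_le_nhds
      have h2 : Filter.Tendsto v (nhdsWithin (0:ℝ) ({0}ᶜ : Set ℝ)) (nhds (v 0)) :=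
        (hv.tendsto 0).mono_left nhdsWithin_le_nhds
      have he : u =ᶠ[nhdsWithin (0:ℝ) ({0}ᶜ : Set ℝ)] v :=
        eventually_nhdsWithin_of_forall fun t ht =>
          huv t (Set.mem_compl_singleton_iff.1 ht)
      exact tendsto_nhds_unique (h1.congr' he) h2
    have hu0 : u 0 = permCumulant g ft A := by
      rw [hu_def, permCumulant]
      refine Finset.sum_congr rfl fun π _ => ?_
      rw [prod_eq_fact]
    have hv0 : v 0 = cyc g ft A := by
      rw [hv_def]
      simp only
      rw [Finset.sum_eq_single_of_mem {A} (singleton_mem_parts hA)]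
      · rw [Finset.card_singleton, Nat.sub_self, pow_zero, one_mul,
          Finset.prod_singleton]
      · intro ρ hρ hne
        have h1 : 1 ≤ ρ.card := hcard ρ hρ
        have h2 : ρ.card ≠ 1 := fun h => hne (parts_card_eq_one hρ h)
        rw [zero_pow (by omega : ρ.card - 1 ≠ 0), zero_mul]
    rw [← hu0, h0, hv0]


end CumulantAux

/-- **Cyclic-permutation formula for cumulants**: if `f̃` is multiplicative over
the cycle decomposition and `g` is symmetric, the cumulant function of
`F̃(B) = Σ_{σ∈S(B)} f̃(σ) ∏ g(i,σ i)` equals the same sum restricted to cyclic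
permutations of `A`. -/
theorem cumulant_cyclic_permutations (g : Fin n → Fin n → ℝ)
    (hg : ∀ i j, g i j = g j i) (ft : Equiv.Perm (Fin n) → ℝ)
    (hft : ∀ σ : Equiv.Perm (Fin n), ft σ = ∏ c ∈ σ.cycleFactorsFinset, ft c)
    (A : Finset (Fin n)) :
    permCumulant g ft A =
      ∑ σ ∈ Finset.univ.filter (fun σ : Equiv.Perm (Fin n) => IsCyclicOn σ A),
        ft σ * ∏ i ∈ A, g i (σ i) :=
  CumulantAux.cumulant_cyclic_aux g ft hft A
end

section
/- Fermionic Wick theorem for pairs: let C be an invertible m×m real matrix, and define the fermionic Gaussian state ⟨F⟩_C = det(C)^{-1} ∫ ∂ψ_1∂ψ̄_1⋯∂ψ_m∂ψ̄_m F exp(ψ̄^T C ψ). Then for any subset A ⊂ [m] (with indices ordered), ⟨∏_{i∈A} ψ̄_i ψ_i⟩_C = det((C^{-T})_{AA}), the principal minor of the inverse-transpose of C indexed by A. -/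
open scoped BigOperators Classical

set_option linter.unusedSectionVars false
namespace FermionicWick

variable {m : ℕ} {A : Type*} [Ring A] [Algebra ℝ A]

def pl (ψ ψb : Fin m → A) (l : List (Fin m ⊕ Fin m)) : A :=
  (l.map (Sum.elim ψ ψb)).prod

section Grassmann

variable (ψ ψb : Fin m → A)

@[simp] lemma pl_nil : pl ψ ψb [] = 1 := rfl
@[simp] lemma pl_cons (s l) : pl ψ ψb (s :: l) = Sum.elim ψ ψb s * pl ψ ψb l := by
  simp [pl]
@[simp] lemma pl_append (l₁ l₂) : pl ψ ψb (l₁ ++ l₂) = pl ψ ψb l₁ * pl ψ ψb l₂ := by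
  simp [pl]

variable (hanti : ∀ s t : Fin m ⊕ Fin m,
      Sum.elim ψ ψb s * Sum.elim ψ ψb t = -(Sum.elim ψ ψb t * Sum.elim ψ ψb s))
    (hsq : ∀ s : Fin m ⊕ Fin m, Sum.elim ψ ψb s * Sum.elim ψ ψb s = 0)

include hanti in
lemma move (s t : Fin m ⊕ Fin m) (x : A) :
    Sum.elim ψ ψb s * (Sum.elim ψ ψb t * x) = -(Sum.elim ψ ψb t * (Sum.elim ψ ψb s * x)) := by
  rw [← mul_assoc, hanti s t, neg_mul, mul_assoc]

include hanti hsq in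
lemma sandwich (s : Fin m ⊕ Fin m) (l : List (Fin m ⊕ Fin m)) :
    Sum.elim ψ ψb s * pl ψ ψb l * Sum.elim ψ ψb s = 0 := by
  induction l with
  | nil => simpa using hsq s
  | cons t l ih =>
    rw [pl_cons, move ψ ψb hanti s t, neg_mul, mul_assoc, ih, mul_zero, neg_zero]

include hanti hsq in
lemma pl_dup {l : List (Fin m ⊕ Fin m)} (h : ¬ l.Nodup) : pl ψ ψb l = 0 := by
  classical
  induction l with
  | nil => simp at h
  | cons a t ih =>
    rcases Classical.em (a ∈ t) with ha | ha
    · obtain ⟨t₁, t₂, rfl⟩ := List.append_of_mem ha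
      have hs := sandwich ψ ψb hanti hsq a t₁
      have : pl ψ ψb (a :: (t₁ ++ a :: t₂))
          = (Sum.elim ψ ψb a * pl ψ ψb t₁ * Sum.elim ψ ψb a) * pl ψ ψb t₂ := by
        simp [mul_assoc]
      rw [this, hs, zero_mul]
    · have : ¬ t.Nodup := fun hn => h (hn.cons ha)
      rw [pl_cons, ih this, mul_zero]

include hanti in
lemma pair_comm (x y s : Fin m ⊕ Fin m) :
    Commute (Sum.elim ψ ψb x * Sum.elim ψ ψb y) (Sum.elim ψ ψb s) := by
  show _ = _
  calc (Sum.elim ψ ψb x * Sum.elim ψ ψb y) * Sum.elim ψ ψb s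
      = Sum.elim ψ ψb x * (Sum.elim ψ ψb y * Sum.elim ψ ψb s) := by rw [mul_assoc]
    _ = Sum.elim ψ ψb x * (-(Sum.elim ψ ψb s * Sum.elim ψ ψb y)) := by rw [hanti y s]
    _ = -(Sum.elim ψ ψb x * Sum.elim ψ ψb s) * Sum.elim ψ ψb y := by
        rw [mul_neg, ← mul_assoc, ← neg_mul]
    _ = (Sum.elim ψ ψb s * Sum.elim ψ ψb x) * Sum.elim ψ ψb y := by rw [← hanti s x]
    _ = Sum.elim ψ ψb s * (Sum.elim ψ ψb x * Sum.elim ψ ψb y) := by rw [mul_assoc]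



lemma ofFn_piece {n : ℕ} (f f' : Fin n → A) (a b : ℕ)
    (hag : ∀ t : Fin n, a ≤ (t : ℕ) → (t : ℕ) < a + b → f' t = f t) :
    ((List.ofFn f').drop a).take b = ((List.ofFn f).drop a).take b := by
  apply List.ext_getElem
  · simp
  · intro i h1 h2
    simp only [List.getElem_take, List.getElem_drop, List.getElem_ofFn]
    simp only [List.length_take, List.length_drop, List.length_ofFn, lt_min_iff] at h1
    exact hag ⟨a + i, by omega⟩ (by simp) (by simp; omega)

lemma ofFn_piece_drop {n : ℕ} (f f' : Fin n → A) (a : ℕ)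
    (hag : ∀ t : Fin n, a ≤ (t : ℕ) → f' t = f t) :
    (List.ofFn f').drop a = (List.ofFn f).drop a := by
  apply List.ext_getElem
  · simp
  · intro i h1 h2
    simp only [List.getElem_drop, List.getElem_ofFn]
    simp only [List.length_drop, List.length_ofFn] at h1
    exact hag ⟨a + i, by omega⟩ (by simp)

lemma ofFn_prod_decomp {n : ℕ} (f : Fin n → A) (u v : Fin n) (h : (u : ℕ) < (v : ℕ)) :
    (List.ofFn f).prod =
      (((List.ofFn f).drop 0).take u).prod * (f u *
        ((((List.ofFn f).drop (u + 1)).take ((v : ℕ) - (u + 1))).prod * (f v *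
          ((List.ofFn f).drop ((v : ℕ) + 1)).prod))) := by
  have hu : (u : ℕ) < (List.ofFn f).length := by simp
  have hv : (v : ℕ) < (List.ofFn f).length := by simp
  conv_lhs => rw [← List.take_append_drop (u : ℕ) (List.ofFn f)]
  rw [List.drop_eq_getElem_cons hu]
  have h2 : (List.ofFn f).drop ((u : ℕ) + 1) =
      ((List.ofFn f).drop ((u : ℕ) + 1)).take ((v : ℕ) - ((u : ℕ) + 1)) ++
        ((List.ofFn f)[(v : ℕ)]'hv :: (List.ofFn f).drop ((v : ℕ) + 1)) := by
    conv_lhs => rw [← List.take_append_drop ((v : ℕ) - ((u : ℕ) + 1))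
      ((List.ofFn f).drop ((u : ℕ) + 1))]
    congr 1
    rw [List.drop_drop, show (u : ℕ) + 1 + ((v : ℕ) - ((u : ℕ) + 1)) = (v : ℕ) from by omega,
      List.drop_eq_getElem_cons hv]
  conv_lhs => rw [h2]
  simp [List.prod_append, mul_assoc, List.drop_zero]


include hanti in
lemma core7 (a b u v : Fin m ⊕ Fin m) (P D : A)
    (hPu : Commute P (Sum.elim ψ ψb u)) (hPv : Commute P (Sum.elim ψ ψb v)) :
    (Sum.elim ψ ψb a * Sum.elim ψ ψb v) * (P * ((Sum.elim ψ ψb b * Sum.elim ψ ψb u) * D)) =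
      -((Sum.elim ψ ψb a * Sum.elim ψ ψb u) * (P * ((Sum.elim ψ ψb b * Sum.elim ψ ψb v) * D))) := by
  have key : ∀ x y : Fin m ⊕ Fin m, Commute P (Sum.elim ψ ψb x) →
      (Sum.elim ψ ψb a * Sum.elim ψ ψb x) * (P * ((Sum.elim ψ ψb b * Sum.elim ψ ψb y) * D)) =
        -(Sum.elim ψ ψb a * (P * (Sum.elim ψ ψb b * (Sum.elim ψ ψb x * (Sum.elim ψ ψb y * D))))) := by
    intro x y hPx
    calc (Sum.elim ψ ψb a * Sum.elim ψ ψb x) * (P * ((Sum.elim ψ ψb b * Sum.elim ψ ψb y) * D))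
        = Sum.elim ψ ψb a * ((Sum.elim ψ ψb x * P) * (Sum.elim ψ ψb b * (Sum.elim ψ ψb y * D))) := by
          simp only [mul_assoc]
      _ = Sum.elim ψ ψb a * ((P * Sum.elim ψ ψb x) * (Sum.elim ψ ψb b * (Sum.elim ψ ψb y * D))) := by
          rw [hPx.symm.eq]
      _ = Sum.elim ψ ψb a * (P * (Sum.elim ψ ψb x * (Sum.elim ψ ψb b * (Sum.elim ψ ψb y * D)))) := by
          simp only [mul_assoc]
      _ = Sum.elim ψ ψb a * (P * (-(Sum.elim ψ ψb b * (Sum.elim ψ ψb x * (Sum.elim ψ ψb y * D))))) := by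
          rw [move ψ ψb hanti x b]
      _ = -(Sum.elim ψ ψb a * (P * (Sum.elim ψ ψb b * (Sum.elim ψ ψb x * (Sum.elim ψ ψb y * D))))) := by
          simp only [mul_neg]
  rw [key v u hPv, key u v hPu, move ψ ψb hanti v u]
  simp only [mul_neg, neg_neg]

include hanti in
lemma core7' (i i' x y : Fin m) (P D : A) (hPx : Commute P (ψ x)) (hPy : Commute P (ψ y)) :
    (ψb i * ψ y) * (P * ((ψb i' * ψ x) * D)) = -((ψb i * ψ x) * (P * ((ψb i' * ψ y) * D))) :=
  core7 ψ ψb hanti (.inr i) (.inr i') (.inl x) (.inl y) P D hPx hPy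

include hanti in
lemma pair_comm' (i j x : Fin m) : Commute (ψb i * ψ j) (ψ x) :=
  pair_comm ψ ψb hanti (.inr i) (.inl j) (.inl x)

/-- ordered product of pair factors -/
def Wg (ψ ψb : Fin m → A) {k : ℕ} (g : Fin k → Fin m × Fin m) : A :=
  (List.ofFn fun t => ψb (g t).1 * ψ (g t).2).prod

include hanti in
lemma W_swap_aux {k : ℕ} (a j : Fin k → Fin m) (u v : Fin k) (hlt : (u : ℕ) < (v : ℕ)) :
    Wg ψ ψb (fun t => (a t, j (Equiv.swap u v t))) = -(Wg ψ ψb fun t => (a t, j t)) := by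
  have huv : u ≠ v := fun h => absurd (congrArg (Fin.val) h) (Nat.ne_of_lt hlt)
  set f : Fin k → A := fun t => ψb (a t) * ψ (j t) with hf
  set f' : Fin k → A := fun t => ψb (a t) * ψ (j (Equiv.swap u v t)) with hf'
  have hag : ∀ t : Fin k, t ≠ u → t ≠ v → f' t = f t := by
    intro t htu htv
    simp only [hf', hf, Equiv.swap_apply_of_ne_of_ne htu htv]
  have hp1 : ((List.ofFn f').drop 0).take (u : ℕ) = ((List.ofFn f).drop 0).take (u : ℕ) :=
    ofFn_piece f f' 0 u (fun t _ ht => hag t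
      (fun h => by subst h; omega) (fun h => by subst h; omega))
  have hp2 : ((List.ofFn f').drop ((u : ℕ) + 1)).take ((v : ℕ) - ((u : ℕ) + 1)) =
      ((List.ofFn f).drop ((u : ℕ) + 1)).take ((v : ℕ) - ((u : ℕ) + 1)) :=
    ofFn_piece f f' ((u : ℕ) + 1) ((v : ℕ) - ((u : ℕ) + 1)) (fun t h1 h2 => hag t
      (fun h => by subst h; omega) (fun h => by subst h; omega))
  have hp3 : (List.ofFn f').drop ((v : ℕ) + 1) = (List.ofFn f).drop ((v : ℕ) + 1) :=
    ofFn_piece_drop f f' ((v : ℕ) + 1) (fun t h1 => hag t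
      (fun h => by subst h; omega) (fun h => by subst h; omega))
  have hfu : f' u = ψb (a u) * ψ (j v) := by simp [hf', Equiv.swap_apply_left]
  have hfv : f' v = ψb (a v) * ψ (j u) := by simp [hf', Equiv.swap_apply_right]
  have hM : ∀ x : Fin m, Commute
      ((((List.ofFn f).drop ((u : ℕ) + 1)).take ((v : ℕ) - ((u : ℕ) + 1))).prod) (ψ x) := by
    intro x
    refine (Commute.list_prod_right _ _ fun z hz => ?_).symm
    have hz2 : z ∈ List.ofFn f := List.mem_of_mem_drop (List.mem_of_mem_take hz)
    obtain ⟨t, ht⟩ := List.mem_ofFn.1 hz2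
    rw [← ht]
    exact (pair_comm' ψ ψb hanti (a t) (j t) x).symm
  show (List.ofFn f').prod = -(List.ofFn f).prod
  rw [ofFn_prod_decomp f' u v hlt, ofFn_prod_decomp f u v hlt, hp1, hp2, hp3, hfu, hfv,
    core7' ψ ψb hanti (a u) (a v) (j u) (j v) _ _ (hM (j u)) (hM (j v)), mul_neg]

include hanti in
lemma W_swap {k : ℕ} (a j : Fin k → Fin m) (u v : Fin k) (huv : u ≠ v) :
    Wg ψ ψb (fun t => (a t, j (Equiv.swap u v t))) = -(Wg ψ ψb fun t => (a t, j t)) := by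
  rcases Nat.lt_or_ge (u : ℕ) (v : ℕ) with hlt | hge
  · exact W_swap_aux ψ ψb hanti a j u v hlt
  · have hlt : (v : ℕ) < (u : ℕ) :=
      lt_of_le_of_ne hge (fun h => huv (Fin.ext h.symm))
    have := W_swap_aux ψ ψb hanti a j v u hlt
    rwa [Equiv.swap_comm] at this

include hanti in
lemma W_perm {k : ℕ} (a : Fin k → Fin m) (σ : Equiv.Perm (Fin k)) :
    ∀ j : Fin k → Fin m, Wg ψ ψb (fun t => (a t, j (σ t))) =
      ((Equiv.Perm.sign σ : ℤ) : ℝ) • Wg ψ ψb (fun t => (a t, j t)) := by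
  refine Equiv.Perm.swap_induction_on σ (fun j => by simp) ?_
  rintro f x y hxy ih j
  have h1 : (fun t => (a t, j ((Equiv.swap x y * f) t)))
      = fun t => (a t, (fun s => j (Equiv.swap x y s)) (f t)) := by
    funext t; simp [Equiv.Perm.mul_apply]
  rw [h1, ih (fun s => j (Equiv.swap x y s)), W_swap ψ ψb hanti a j x y hxy]
  rw [Equiv.Perm.sign_mul, Equiv.Perm.sign_swap hxy]
  push_cast
  rw [smul_neg, ← neg_smul]
  ring_nf

/-- product of pairs over S -/
def PS (ψ ψb : Fin m → A) (S : Finset (Fin m)) : A :=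
  ((S.sort (· ≤ ·)).map fun i => ψb i * ψ i).prod

def lS {m : ℕ} (S : Finset (Fin m)) : List (Fin m ⊕ Fin m) :=
  (S.sort (· ≤ ·)).flatMap fun i => [.inr i, .inl i]

def lG {m k : ℕ} (g : Fin k → Fin m × Fin m) : List (Fin m ⊕ Fin m) :=
  (List.ofFn g).flatMap fun p => [.inr p.1, .inl p.2]

lemma pl_flatMap {β : Type*} (L : List β) (h : β → List (Fin m ⊕ Fin m)) :
    pl ψ ψb (L.flatMap h) = (L.map fun x => pl ψ ψb (h x)).prod := by
  induction L with
  | nil => simp [pl]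
  | cons x L ih => simp [List.flatMap_cons, ih]

lemma pl_pair (i j : Fin m) : pl ψ ψb [.inr i, .inl j] = ψb i * ψ j := by
  simp [pl]

lemma PS_eq (S : Finset (Fin m)) : PS ψ ψb S = pl ψ ψb (lS S) := by
  rw [lS, pl_flatMap, PS]
  congr 1
  apply List.map_congr_left
  intro i _
  exact (pl_pair ψ ψb i i).symm

lemma Wg_eq {k : ℕ} (g : Fin k → Fin m × Fin m) : Wg ψ ψb g = pl ψ ψb (lG g) := by
  rw [lG, pl_flatMap, Wg, List.map_ofFn]
  exact congrArg List.prod (congrArg List.ofFn (funext fun t =>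
    (pl_pair ψ ψb (g t).1 (g t).2).symm))

lemma mul_eq_pl (S : Finset (Fin m)) {k : ℕ} (g : Fin k → Fin m × Fin m) :
    PS ψ ψb S * Wg ψ ψb g = pl ψ ψb (lS S ++ lG g) := by
  rw [pl_append, PS_eq, Wg_eq]

lemma map_sublist_flatMap {β γ : Type*} (L : List β) (h : β → List γ) (f : β → γ)
    (hf : ∀ x, f x ∈ h x) : List.Sublist (L.map f) (L.flatMap h) := by
  induction L with
  | nil => simp
  | cons x L ih =>
    rw [List.map_cons, List.flatMap_cons]
    exact (List.singleton_sublist.2 (hf x)).append ih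

include hanti hsq in
lemma nonzero_struct (S : Finset (Fin m)) {k : ℕ} (g : Fin k → Fin m × Fin m)
    (B : A →ₗ[ℝ] ℝ)
    (hB0 : ∀ l : List (Fin m ⊕ Fin m), (∃ s, s ∉ l) →
      B (l.map (Sum.elim ψ ψb)).prod = 0)
    (h : B (PS ψ ψb S * Wg ψ ψb g) ≠ 0) :
    Function.Injective (fun t => (g t).1) ∧ Function.Injective (fun t => (g t).2) ∧
    (∀ t, (g t).1 ∉ S) ∧ (∀ t, (g t).2 ∉ S) ∧
    (∀ x, x ∉ S → (∃ t, (g t).1 = x) ∧ (∃ t, (g t).2 = x)) := by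
  classical
  have hflat := mul_eq_pl ψ ψb S g
  have hnd : (lS S ++ lG g).Nodup := by
    by_contra hnd
    exact h (by rw [hflat, pl_dup ψ ψb hanti hsq hnd, map_zero])
  have hmem : ∀ s : Fin m ⊕ Fin m, s ∈ lS S ++ lG g := by
    intro s; by_contra hs
    exact h (by rw [hflat]; exact hB0 _ ⟨s, hs⟩)
  -- inr side
  have sub1r : List.Sublist ((S.sort (· ≤ ·)).map Sum.inr) (lS S) :=
    map_sublist_flatMap _ _ _ (fun i => by simp)
  have sub2r : List.Sublist ((List.ofFn g).map fun p => Sum.inr p.1) (lG g) :=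
    map_sublist_flatMap _ _ _ (fun p => by simp)
  have h1r : (((S.sort (· ≤ ·)) ++ (List.ofFn g).map Prod.fst).map (Sum.inr : Fin m → Fin m ⊕ Fin m)).Nodup := by
    have := hnd.sublist (sub1r.append sub2r)
    simp [List.map_append, List.map_map, Function.comp] at this ⊢; exact this
  have h2r := h1r.of_map (Sum.inr : Fin m → Fin m ⊕ Fin m)
  rw [List.nodup_append] at h2r
  obtain ⟨-, hn2r, hdisjr⟩ := h2r
  have injr : Function.Injective (fun t => (g t).1) := by
    rw [List.map_ofFn] at hn2r
    exact List.nodup_ofFn.1 hn2r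
  have notSr : ∀ t, (g t).1 ∉ S := by
    intro t ht
    exact hdisjr _ ((Finset.mem_sort _).2 ht) (g t).1 (by
      simp only [List.mem_map, List.mem_ofFn]
      exact ⟨g t, ⟨t, rfl⟩, rfl⟩) rfl
  -- inl side
  have sub1l : List.Sublist ((S.sort (· ≤ ·)).map Sum.inl) (lS S) :=
    map_sublist_flatMap _ _ _ (fun i => by simp)
  have sub2l : List.Sublist ((List.ofFn g).map fun p => Sum.inl p.2) (lG g) :=
    map_sublist_flatMap _ _ _ (fun p => by simp)
  have h1l : (((S.sort (· ≤ ·)) ++ (List.ofFn g).map Prod.snd).map (Sum.inl : Fin m → Fin m ⊕ Fin m)).Nodup := by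
    have := hnd.sublist (sub1l.append sub2l)
    simp [List.map_append, List.map_map, Function.comp] at this ⊢; exact this
  have h2l := h1l.of_map (Sum.inl : Fin m → Fin m ⊕ Fin m)
  rw [List.nodup_append] at h2l
  obtain ⟨-, hn2l, hdisjl⟩ := h2l
  have injl : Function.Injective (fun t => (g t).2) := by
    rw [List.map_ofFn] at hn2l
    exact List.nodup_ofFn.1 hn2l
  have notSl : ∀ t, (g t).2 ∉ S := by
    intro t ht
    exact hdisjl _ ((Finset.mem_sort _).2 ht) (g t).2 (by
      simp only [List.mem_map, List.mem_ofFn]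
      exact ⟨g t, ⟨t, rfl⟩, rfl⟩) rfl
  refine ⟨injr, injl, notSr, notSl, ?_⟩
  intro x hx
  constructor
  · have := hmem (Sum.inr x)
    simp only [List.mem_append, lS, lG, List.mem_flatMap, List.mem_ofFn,
      List.mem_cons, List.not_mem_nil, or_false, Finset.mem_sort] at this
    rcases this with ⟨i, hiS, hi⟩ | ⟨p, ⟨t, rfl⟩, hp⟩
    · rcases hi with hi | hi
      · cases hi; exact absurd hiS hx
      · cases hi
    · rcases hp with hp | hp
      · exact ⟨t, Sum.inr_injective hp.symm⟩
      · cases hp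
  · have := hmem (Sum.inl x)
    simp only [List.mem_append, lS, lG, List.mem_flatMap, List.mem_ofFn,
      List.mem_cons, List.not_mem_nil, or_false, Finset.mem_sort] at this
    rcases this with ⟨i, hiS, hi⟩ | ⟨p, ⟨t, rfl⟩, hp⟩
    · rcases hi with hi | hi
      · cases hi
      · cases hi; exact absurd hiS hx
    · rcases hp with hp | hp
      · cases hp
      · exact ⟨t, Sum.inl_injective hp.symm⟩

include hanti in
lemma Wg_cons {k : ℕ} (p : Fin m × Fin m) (g : Fin k → Fin m × Fin m) :
    Wg ψ ψb (Fin.cons p g) = (ψb p.1 * ψ p.2) * Wg ψ ψb g := by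
  rw [Wg, List.ofFn_succ, List.prod_cons]
  simp only [Fin.cons_zero, Fin.cons_succ]
  rfl

include hanti in
lemma base_value (S : Finset (Fin m)) {k : ℕ} (τ : Fin k ≃ {x : Fin m // x ∉ S})
    (B : A →ₗ[ℝ] ℝ)
    (hBtop : B (List.ofFn fun i : Fin m => ψb i * ψ i).prod = 1) :
    B (PS ψ ψb S * Wg ψ ψb (fun t => ((τ t : Fin m), (τ t : Fin m)))) = 1 := by
  classical
  have hnod : (S.sort (· ≤ ·) ++ List.ofFn (fun t => (τ t : Fin m))).Nodup := by
    rw [List.nodup_append]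
    refine ⟨S.sort_nodup _, ?_, ?_⟩
    · exact List.nodup_ofFn.2 (Subtype.val_injective.comp τ.injective)
    · rintro x hx _ hx2 rfl
      simp only [List.mem_ofFn, Set.mem_range] at hx2
      obtain ⟨t, ht⟩ := hx2
      subst ht
      exact (τ t).2 ((Finset.mem_sort _).1 hx)
  have hperm : List.Perm (S.sort (· ≤ ·) ++ List.ofFn (fun t => (τ t : Fin m)))
      (List.finRange m) := by
    rw [List.perm_ext_iff_of_nodup hnod (List.nodup_finRange m)]
    intro x
    simp only [List.mem_append, Finset.mem_sort, List.mem_ofFn, Set.mem_range,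
      List.mem_finRange, iff_true]
    by_cases hx : x ∈ S
    · exact Or.inl hx
    · exact Or.inr ⟨τ.symm ⟨x, hx⟩, by simp⟩
  have hcomm : ∀ i j : Fin m, Commute (ψb i * ψ i) (ψb j * ψ j) := fun i j =>
    (pair_comm ψ ψb hanti (.inr i) (.inl i) (.inr j)).mul_right
      (pair_comm ψ ψb hanti (.inr i) (.inl i) (.inl j))
  have h2 : PS ψ ψb S * Wg ψ ψb (fun t => ((τ t : Fin m), (τ t : Fin m)))
      = (List.ofFn fun i : Fin m => ψb i * ψ i).prod := by
    rw [PS, Wg]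
    have h3 : (List.ofFn fun t => ψb ((fun t => ((τ t : Fin m), (τ t : Fin m))) t).1 *
          ψ ((fun t => ((τ t : Fin m), (τ t : Fin m))) t).2)
        = (List.ofFn (fun t => (τ t : Fin m))).map (fun i => ψb i * ψ i) := by
      rw [List.map_ofFn]; rfl
    rw [h3, ← List.prod_append, ← List.map_append,
      List.ofFn_eq_map (f := fun i : Fin m => ψb i * ψ i)]
    apply List.Perm.prod_eq' (hperm.map _)
    rw [List.pairwise_map]
    exact List.pairwise_of_forall_mem_list fun a _ b _ => hcomm a b
  rw [h2, hBtop]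

def encode {m : ℕ} (S : Finset (Fin m)) {k : ℕ} (τ : Fin k ≃ {x : Fin m // x ∉ S})
    (σ : Equiv.Perm {x : Fin m // x ∉ S}) : Fin k → Fin m × Fin m :=
  fun t => (↑(τ t), ↑(σ (τ t)))

include hanti in
lemma encode_value (S : Finset (Fin m)) {k : ℕ} (τ : Fin k ≃ {x : Fin m // x ∉ S})
    (σ : Equiv.Perm {x : Fin m // x ∉ S})
    (B : A →ₗ[ℝ] ℝ)
    (hBtop : B (List.ofFn fun i : Fin m => ψb i * ψ i).prod = 1) :
    B (PS ψ ψb S * Wg ψ ψb (encode S τ σ)) = ((Equiv.Perm.sign σ : ℤ) : ℝ) := by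
  have h1 : encode S τ σ = fun t => ((fun s => (τ s : Fin m)) t,
      (fun s => (τ s : Fin m)) (((τ.trans σ).trans τ.symm) t)) := by
    funext t
    simp [encode]
  rw [h1, W_perm ψ ψb hanti (fun s => (τ s : Fin m)) ((τ.trans σ).trans τ.symm)
    (fun s => (τ s : Fin m)), mul_smul_comm, map_smul, smul_eq_mul,
    base_value ψ ψb hanti S τ B hBtop, mul_one, Equiv.Perm.sign_trans_trans_symm]

lemma encode_coeff (S : Finset (Fin m)) {k : ℕ} (τ : Fin k ≃ {x : Fin m // x ∉ S})
    (σ : Equiv.Perm {x : Fin m // x ∉ S}) (C : Matrix (Fin m) (Fin m) ℝ) :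
    (∏ t, C (encode S τ σ t).1 (encode S τ σ t).2)
      = ∏ x : {x : Fin m // x ∉ S}, C ↑x ↑(σ x) := by
  rw [← Equiv.prod_comp τ (fun x => C ↑x ↑(σ x))]
  rfl

include hanti in
lemma Qpow (C : Matrix (Fin m) (Fin m) ℝ) (k : ℕ) :
    (∑ i, ∑ j, C i j • (ψb i * ψ j)) ^ k =
      ∑ g : Fin k → Fin m × Fin m, (∏ t, C (g t).1 (g t).2) • Wg ψ ψb g := by
  induction k with
  | zero =>
    rw [pow_zero, Fintype.sum_unique]
    simp [Wg]
  | succ k ih =>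
    have hq : (∑ i, ∑ j, C i j • (ψb i * ψ j))
        = ∑ p : Fin m × Fin m, C p.1 p.2 • (ψb p.1 * ψ p.2) :=
      (Fintype.sum_prod_type (f := fun p : Fin m × Fin m => C p.1 p.2 • (ψb p.1 * ψ p.2))).symm
    have hsum : ∀ (p : Fin m × Fin m) (g : Fin k → Fin m × Fin m),
        (∏ t, C ((Fin.cons p g : Fin (k+1) → Fin m × Fin m) t).1
            ((Fin.cons p g : Fin (k+1) → Fin m × Fin m) t).2) •
            Wg ψ ψb (Fin.cons p g)
          = (C p.1 p.2 • (ψb p.1 * ψ p.2)) * ((∏ t, C (g t).1 (g t).2) • Wg ψ ψb g) := by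
      intro p g
      rw [Fin.prod_univ_succ, Wg_cons ψ ψb hanti, smul_mul_smul_comm]
      simp only [Fin.cons_zero, Fin.cons_succ]
    rw [pow_succ', ih, hq, Finset.sum_mul_sum]
    conv_rhs => rw [← Equiv.sum_comp (Fin.consEquiv fun _ : Fin (k+1) => Fin m × Fin m)
      (fun h => (∏ t, C (h t).1 (h t).2) • Wg ψ ψb h), Fintype.sum_prod_type]
    refine Finset.sum_congr rfl fun p _ => Finset.sum_congr rfl fun g _ => ?_
    exact (hsum p g).symm

include hanti hsq in
lemma main_sum (S : Finset (Fin m)) (B : A →ₗ[ℝ] ℝ)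
    (hB0 : ∀ l : List (Fin m ⊕ Fin m), (∃ s, s ∉ l) →
      B (l.map (Sum.elim ψ ψb)).prod = 0)
    (hBtop : B (List.ofFn fun i : Fin m => ψb i * ψ i).prod = 1)
    (C : Matrix (Fin m) (Fin m) ℝ) :
    B (PS ψ ψb S * ∑ k ∈ Finset.range (m + 1),
        (k.factorial : ℝ)⁻¹ • (∑ i, ∑ j, C i j • (ψb i * ψ j)) ^ k)
      = (C.submatrix (fun a : {x : Fin m // x ∉ S} => (a : Fin m))
          (fun a : {x : Fin m // x ∉ S} => (a : Fin m))).det := by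
  classical
  have hterm : ∀ k : ℕ, B (PS ψ ψb S * (∑ i, ∑ j, C i j • (ψb i * ψ j)) ^ k)
      = ∑ g : Fin k → Fin m × Fin m,
          (∏ t, C (g t).1 (g t).2) * B (PS ψ ψb S * Wg ψ ψb g) := by
    intro k
    rw [Qpow ψ ψb hanti C k, Finset.mul_sum, map_sum]
    exact Finset.sum_congr rfl fun g _ => by rw [mul_smul_comm, map_smul, smul_eq_mul]
  have hksize : ∀ {k : ℕ} (g : Fin k → Fin m × Fin m), B (PS ψ ψb S * Wg ψ ψb g) ≠ 0 →
      ∃ (τ : Fin k ≃ {x : Fin m // x ∉ S}) (σ : Equiv.Perm {x : Fin m // x ∉ S}),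
        g = encode S τ σ := by
    intro k g h0
    obtain ⟨injr, injl, notSr, notSl, cov⟩ := nonzero_struct ψ ψb hanti hsq S g B hB0 h0
    have hinj1 : Function.Injective
        (fun t => (⟨(g t).1, notSr t⟩ : {x : Fin m // x ∉ S})) :=
      fun a b hab => injr (congrArg Subtype.val hab)
    have hsurj1 : Function.Surjective
        (fun t => (⟨(g t).1, notSr t⟩ : {x : Fin m // x ∉ S})) := by
      rintro ⟨x, hx⟩; obtain ⟨t, ht⟩ := (cov x hx).1; exact ⟨t, Subtype.ext ht⟩
    have hinj2 : Function.Injective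
        (fun t => (⟨(g t).2, notSl t⟩ : {x : Fin m // x ∉ S})) :=
      fun a b hab => injl (congrArg Subtype.val hab)
    have hsurj2 : Function.Surjective
        (fun t => (⟨(g t).2, notSl t⟩ : {x : Fin m // x ∉ S})) := by
      rintro ⟨x, hx⟩; obtain ⟨t, ht⟩ := (cov x hx).2; exact ⟨t, Subtype.ext ht⟩
    refine ⟨Equiv.ofBijective _ ⟨hinj1, hsurj1⟩,
      (Equiv.ofBijective _ ⟨hinj1, hsurj1⟩).symm.trans (Equiv.ofBijective _ ⟨hinj2, hsurj2⟩), ?_⟩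
    funext t
    show g t = (_, _)
    apply Prod.ext
    · rfl
    · show (g t).2 = ((Equiv.ofBijective _ ⟨hinj2, hsurj2⟩)
        ((Equiv.ofBijective _ ⟨hinj1, hsurj1⟩).symm ((Equiv.ofBijective _ ⟨hinj1, hsurj1⟩) t)) : Fin m)
      rw [Equiv.symm_apply_apply]
      rfl
  have hvanish : ∀ k : ℕ, k ≠ Fintype.card {x : Fin m // x ∉ S} →
      B (PS ψ ψb S * (∑ i, ∑ j, C i j • (ψb i * ψ j)) ^ k) = 0 := by
    intro k hk
    rw [hterm k]
    refine Finset.sum_eq_zero fun g _ => ?_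
    rcases eq_or_ne (B (PS ψ ψb S * Wg ψ ψb g)) 0 with h0 | h0
    · rw [h0, mul_zero]
    · obtain ⟨τ, σ, -⟩ := hksize g h0
      exact absurd (by simpa using Fintype.card_congr τ) hk
  have hdetsum : ∑ σ : Equiv.Perm {x : Fin m // x ∉ S},
        ((Equiv.Perm.sign σ : ℤ) : ℝ) * ∏ x : {x : Fin m // x ∉ S}, C ↑x ↑(σ x)
      = (C.submatrix (fun a : {x : Fin m // x ∉ S} => (a : Fin m))
          (fun a : {x : Fin m // x ∉ S} => (a : Fin m))).det := by
    conv_rhs => rw [← Matrix.det_transpose, Matrix.det_apply']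
    rfl
  set n := Fintype.card {x : Fin m // x ∉ S} with hn
  have hmain : B (PS ψ ψb S * (∑ i, ∑ j, C i j • (ψb i * ψ j)) ^ n)
      = (n.factorial : ℝ) * (C.submatrix (fun a : {x : Fin m // x ∉ S} => (a : Fin m))
          (fun a : {x : Fin m // x ∉ S} => (a : Fin m))).det := by
    rw [hterm n]
    have hsum := Finset.sum_of_injOn
      (s := (Finset.univ : Finset ((Fin n ≃ {x : Fin m // x ∉ S})
        × Equiv.Perm {x : Fin m // x ∉ S})))
      (t := (Finset.univ : Finset (Fin n → Fin m × Fin m)))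
      (f := fun p => ((Equiv.Perm.sign p.2 : ℤ) : ℝ) * ∏ x : {x : Fin m // x ∉ S}, C ↑x ↑(p.2 x))
      (g := fun g => (∏ t, C (g t).1 (g t).2) * B (PS ψ ψb S * Wg ψ ψb g))
      (fun p => encode S p.1 p.2)
      (by
        rintro ⟨τ, σ⟩ - ⟨τ', σ'⟩ - hpq
        have hτ : τ = τ' := by
          apply Equiv.ext; intro t
          exact Subtype.ext (congrArg Prod.fst (congrFun hpq t))
        subst hτ
        have hσ : σ = σ' := by
          apply Equiv.ext; intro x
          have h2 := congrArg Prod.snd (congrFun hpq (τ.symm x))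
          simp only [encode, Equiv.apply_symm_apply] at h2
          exact Subtype.val_injective h2
        rw [hσ])
      (by intro p _; simp)
      (by
        intro g _ hg
        rcases eq_or_ne (B (PS ψ ψb S * Wg ψ ψb g)) 0 with h0 | h0
        · rw [h0, mul_zero]
        · exfalso
          obtain ⟨τ, σ, rfl⟩ := hksize g h0
          exact hg ⟨(τ, σ), by simp, rfl⟩)
      (by
        rintro ⟨τ, σ⟩ -
        dsimp only
        rw [encode_coeff S τ σ C, encode_value ψ ψb hanti S τ σ B hBtop, mul_comm])
    rw [← hsum, Fintype.sum_prod_type]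
    dsimp only
    rw [Finset.sum_const]
    have hcard : (Finset.univ : Finset (Fin n ≃ {x : Fin m // x ∉ S})).card = n.factorial := by
      rw [Finset.card_univ, Fintype.card_equiv (Fintype.equivFin _).symm, Fintype.card_fin]
    rw [hcard, nsmul_eq_mul, hdetsum]
  rw [Finset.mul_sum, map_sum]
  have hn_mem : n ∈ Finset.range (m + 1) := by
    rw [Finset.mem_range, hn]
    have := Fintype.card_subtype_le (fun x : Fin m => x ∉ S)
    rw [Fintype.card_fin] at this
    omega
  have hsingle := Finset.sum_eq_single_of_mem (f := fun k =>
      B (PS ψ ψb S * ((k.factorial : ℝ)⁻¹ • (∑ i, ∑ j, C i j • (ψb i * ψ j)) ^ k))) n hn_mem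
    (fun k _ hk => by
      rw [mul_smul_comm, map_smul, smul_eq_mul, hvanish k hk, mul_zero])
  rw [hsingle]
  rw [mul_smul_comm, map_smul, smul_eq_mul, hmain, ← mul_assoc,
    inv_mul_cancel₀ (Nat.cast_ne_zero.2 (Nat.factorial_ne_zero n)), one_mul]

end Grassmann

lemma jacobi {m : ℕ} (C : Matrix (Fin m) (Fin m) ℝ) (hC : IsUnit C.det) (S : Finset (Fin m)) :
    C.det * ((C⁻¹).submatrix (fun a : {x // x ∈ S} => (a : Fin m))
        (fun a : {x // x ∈ S} => (a : Fin m))).det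
      = (C.submatrix (fun a : {x : Fin m // x ∉ S} => (a : Fin m))
          (fun a : {x : Fin m // x ∉ S} => (a : Fin m))).det := by
  classical
  set e := Equiv.sumCompl (fun x : Fin m => x ∈ S) with he
  set M := C.submatrix e e with hMdef
  set D := (C⁻¹).submatrix e e with hDdef
  have hMD : M * D = 1 := by
    rw [hMdef, hDdef, Matrix.submatrix_mul_equiv, Matrix.mul_nonsing_inv C hC,
      Matrix.submatrix_one_equiv]
  have hM : M = Matrix.fromBlocks M.toBlocks₁₁ M.toBlocks₁₂ M.toBlocks₂₁ M.toBlocks₂₂ :=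
    (Matrix.fromBlocks_toBlocks M).symm
  have hD : D = Matrix.fromBlocks D.toBlocks₁₁ D.toBlocks₁₂ D.toBlocks₂₁ D.toBlocks₂₂ :=
    (Matrix.fromBlocks_toBlocks D).symm
  have hprod := hMD
  rw [hM, hD, Matrix.fromBlocks_multiply, ← Matrix.fromBlocks_one] at hprod
  have h11 : M.toBlocks₁₁ * D.toBlocks₁₁ + M.toBlocks₁₂ * D.toBlocks₂₁ = 1 := by
    have h := congrArg Matrix.toBlocks₁₁ hprod
    rwa [Matrix.toBlocks_fromBlocks₁₁, Matrix.toBlocks_fromBlocks₁₁] at h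
  have h21 : M.toBlocks₂₁ * D.toBlocks₁₁ + M.toBlocks₂₂ * D.toBlocks₂₁ = 0 := by
    have h := congrArg Matrix.toBlocks₂₁ hprod
    rwa [Matrix.toBlocks_fromBlocks₂₁, Matrix.toBlocks_fromBlocks₂₁] at h
  have hMN : M * Matrix.fromBlocks D.toBlocks₁₁ 0 D.toBlocks₂₁ 1
      = Matrix.fromBlocks 1 M.toBlocks₁₂ 0 M.toBlocks₂₂ := by
    conv_lhs => rw [hM]
    rw [Matrix.fromBlocks_multiply, h11, h21, Matrix.mul_zero, Matrix.mul_zero,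
      Matrix.mul_one, Matrix.mul_one, zero_add, zero_add]
  have hdet := congrArg Matrix.det hMN
  rw [Matrix.det_mul, Matrix.det_fromBlocks_zero₂₁, Matrix.det_fromBlocks_zero₁₂,
    Matrix.det_one, Matrix.det_one, one_mul, mul_one] at hdet
  have hMdet : M.det = C.det := Matrix.det_submatrix_equiv_self e C
  have hW : D.toBlocks₁₁ = (C⁻¹).submatrix (fun a : {x // x ∈ S} => (a : Fin m))
      (fun a : {x // x ∈ S} => (a : Fin m)) := by
    ext i j
    simp [Matrix.toBlocks₁₁, hDdef, he, Matrix.submatrix_apply]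
  have hM22 : M.toBlocks₂₂ = C.submatrix (fun a : {x : Fin m // x ∉ S} => (a : Fin m))
      (fun a : {x : Fin m // x ∉ S} => (a : Fin m)) := by
    ext i j
    simp [Matrix.toBlocks₂₂, hMdef, he, Matrix.submatrix_apply]
  rw [hMdet, hW, hM22] at hdet
  exact hdet


end FermionicWick


open scoped BigOperators Classical

/-- **Fermionic Wick theorem for pairs**: with Grassmann generators
`ψ i, ψ̄ i` and the Berezin integral `B` (a linear functional vanishing on
monomials missing a generator, normalized on the top monomial), the fermionic
Gaussian state `⟨F⟩_C = det(C)⁻¹ B(F·exp(ψ̄ᵀCψ))` of `∏_{i∈A} ψ̄ i ψ i` equals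
the principal minor `det((C⁻ᵀ)_{AA})` of the inverse-transpose of the
invertible matrix `C`. -/
theorem fermionic_wick_pairs {m : ℕ} {A : Type*} [Ring A] [Algebra ℝ A]
    (ψ ψb : Fin m → A)
    (hanti : ∀ s t : Fin m ⊕ Fin m,
      Sum.elim ψ ψb s * Sum.elim ψ ψb t = -(Sum.elim ψ ψb t * Sum.elim ψ ψb s))
    (hsq : ∀ s : Fin m ⊕ Fin m, Sum.elim ψ ψb s * Sum.elim ψ ψb s = 0)
    (B : A →ₗ[ℝ] ℝ)
    (hB0 : ∀ l : List (Fin m ⊕ Fin m), (∃ s, s ∉ l) →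
      B (l.map (Sum.elim ψ ψb)).prod = 0)
    (hBtop : B (List.ofFn fun i : Fin m => ψb i * ψ i).prod = 1)
    (C : Matrix (Fin m) (Fin m) ℝ) (hC : IsUnit C.det)
    (S : Finset (Fin m)) :
    (C.det)⁻¹ *
        B ((((S.sort (· ≤ ·)).map fun i => ψb i * ψ i).prod) *
          ∑ k ∈ Finset.range (m + 1),
            (k.factorial : ℝ)⁻¹ • (∑ i, ∑ j, C i j • (ψb i * ψ j)) ^ k) =
      ((C⁻¹.transpose).submatrix (fun a : {x // x ∈ S} => (a : Fin m))
        (fun a : {x // x ∈ S} => (a : Fin m))).det := by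
  classical
  have hmain := FermionicWick.main_sum ψ ψb hanti hsq S B hB0 hBtop C
  have hjac := FermionicWick.jacobi C hC S
  rw [show (((S.sort (· ≤ ·)).map fun i => ψb i * ψ i).prod) = FermionicWick.PS ψ ψb S from rfl,
    hmain, ← Matrix.transpose_submatrix, Matrix.det_transpose, ← hjac, ← mul_assoc,
    inv_mul_cancel₀ hC.ne_zero, one_mul]
end
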